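/- arXiv:2205.14466 — 3 statements merged into one kernel-verified Lean document; each statement's English description precedes it below -/
import Mathlib

section
/- For all integers n ≥ 3 and l₀ ≥ 1 there exists a constant c₂(n, l₀), depending only on n and l₀, such that every connected {K_n, S*_n, S̃_n}-free finite simple graph H with diam(H) ≤ l₀ satisfies insp(H) ≤ c₂(n, l₀). -/
open SimpleGraph

/-- `G` contains an induced subgraph isomorphic to `H`. -/
def HasInducedCopy {V W : Type*} (G : SimpleGraph V) (H : SimpleGraph W) : Prop :=
  ∃ f : W ↪ V, ∀ a b : W, G.Adj (f a) (f b) ↔ H.Adj a b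

/-- The star `K_{1,m}` (one center plus `m` leaves). -/
def starGraph (m : ℕ) : SimpleGraph (Unit ⊕ Fin m) := completeBipartiteGraph Unit (Fin m)

/-- `S` induces in `G` a subgraph isomorphic to a path `P_m` on `m ≥ 1` vertices. -/
def IsInducedPathSet {V : Type*} (G : SimpleGraph V) (S : Set V) : Prop :=
  ∃ m : ℕ, 1 ≤ m ∧ Nonempty ((G.induce S) ≃g pathGraph m)

/-- `S` induces in `G` a subgraph isomorphic to a star `K_{1,m}` with `m ≥ 1`. -/
def IsInducedStarSet {V : Type*} (G : SimpleGraph V) (S : Set V) : Prop :=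
  ∃ m : ℕ, 1 ≤ m ∧ Nonempty ((G.induce S) ≃g _root_.starGraph m)

/-- `S` consists of a single vertex (i.e. induces `K_1`). -/
def IsSingletonSet {V : Type*} (S : Set V) : Prop := ∃ v, S = {v}

/-- `S` is the vertex set of an isometric (shortest) path of `G`. -/
def IsIsometricPathSet {V : Type*} (G : SimpleGraph V) (S : Set V) : Prop :=
  ∃ (u v : V) (p : G.Walk u v), p.IsPath ∧ p.length = G.dist u v ∧
    S = {x | x ∈ p.support}

/-- `P` is a family of sets, all satisfying `pred`, whose union is all of `V`. -/
def IsCoverBy {V : Type*} (P : Finset (Set V)) (pred : Set V → Prop) : Prop :=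
  (∀ S ∈ P, pred S) ∧ ∀ v : V, ∃ S ∈ P, v ∈ S

/-- `P` is a cover by sets satisfying `pred`, whose members are pairwise disjoint. -/
def IsPartitionBy {V : Type*} (P : Finset (Set V)) (pred : Set V → Prop) : Prop :=
  IsCoverBy P pred ∧ ∀ S ∈ P, ∀ T ∈ P, S ≠ T → ∀ v, v ∈ S → v ∉ T

/-- Minimum cardinality of a cover by sets satisfying `pred`. -/
noncomputable def coverNumber {V : Type*} (pred : Set V → Prop) : ℕ :=
  sInf {k | ∃ P : Finset (Set V), P.card = k ∧ IsCoverBy P pred}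

/-- Minimum cardinality of a partition into sets satisfying `pred`. -/
noncomputable def partitionNumber {V : Type*} (pred : Set V → Prop) : ℕ :=
  sInf {k | ∃ P : Finset (Set V), P.card = k ∧ IsPartitionBy P pred}

/-- The induced SP-cover number. -/
noncomputable def inspc {V : Type*} (G : SimpleGraph V) : ℕ :=
  coverNumber (fun S => IsInducedStarSet G S ∨ IsInducedPathSet G S)

/-- The induced SP-partition number. -/
noncomputable def inspp {V : Type*} (G : SimpleGraph V) : ℕ :=
  partitionNumber (fun S => IsInducedStarSet G S ∨ IsInducedPathSet G S)

/-- The induced star cover number. -/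
noncomputable def insc {V : Type*} (G : SimpleGraph V) : ℕ :=
  coverNumber (fun S => IsInducedStarSet G S ∨ IsSingletonSet S)

/-- The induced star partition number. -/
noncomputable def insp {V : Type*} (G : SimpleGraph V) : ℕ :=
  partitionNumber (fun S => IsInducedStarSet G S ∨ IsSingletonSet S)

/-- The induced path cover number. -/
noncomputable def inpc {V : Type*} (G : SimpleGraph V) : ℕ :=
  coverNumber (fun S => IsInducedPathSet G S)

/-- The induced path partition number. -/
noncomputable def inpp {V : Type*} (G : SimpleGraph V) : ℕ :=
  partitionNumber (fun S => IsInducedPathSet G S)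

/-- The isometric path cover number. -/
noncomputable def ispc {V : Type*} (G : SimpleGraph V) : ℕ :=
  coverNumber (fun S => IsIsometricPathSet G S)

/-- The isometric path partition number. -/
noncomputable def ispp {V : Type*} (G : SimpleGraph V) : ℕ :=
  partitionNumber (fun S => IsIsometricPathSet G S)

/-- `S*_n` : center `x = inl ()`, middle vertices `y i = inr (inl i)`,
leaves `z i = inr (inr i)`; edges `x yᵢ` and `yᵢ zᵢ`. -/
def SStar (n : ℕ) : SimpleGraph (Unit ⊕ Fin n ⊕ Fin n) :=
  SimpleGraph.fromRel (fun a b =>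
    (∃ i : Fin n, a = Sum.inl () ∧ b = Sum.inr (Sum.inl i)) ∨
    (∃ i : Fin n, a = Sum.inr (Sum.inl i) ∧ b = Sum.inr (Sum.inr i)))

/-- `S̃_n` : `S*_n` together with the edges `x zᵢ`. -/
def STilde (n : ℕ) : SimpleGraph (Unit ⊕ Fin n ⊕ Fin n) :=
  SimpleGraph.fromRel (fun a b =>
    (∃ i : Fin n, a = Sum.inl () ∧ b = Sum.inr (Sum.inl i)) ∨
    (∃ i : Fin n, a = Sum.inr (Sum.inl i) ∧ b = Sum.inr (Sum.inr i)) ∨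
    (∃ i : Fin n, a = Sum.inl () ∧ b = Sum.inr (Sum.inr i)))

/-- `F⁽¹⁾_n` : vertices `x₁ = inl 0`, `x₂ = inl 1`, `yᵢ = inr (inl i)`, `zᵢ = inr (inr i)`;
edges `x₁x₂`, `x₁y₁`, `x₁z₁`, and two paths `y₁⋯yₙ`, `z₁⋯zₙ`. -/
def F1 (n : ℕ) : SimpleGraph (Fin 2 ⊕ Fin n ⊕ Fin n) :=
  SimpleGraph.fromRel (fun a b =>
    (a = Sum.inl 0 ∧ b = Sum.inl 1) ∨
    (∃ j : Fin n, (j : ℕ) = 0 ∧ a = Sum.inl 0 ∧ b = Sum.inr (Sum.inl j)) ∨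
    (∃ j : Fin n, (j : ℕ) = 0 ∧ a = Sum.inl 0 ∧ b = Sum.inr (Sum.inr j)) ∨
    (∃ i j : Fin n, (i : ℕ) + 1 = (j : ℕ) ∧ a = Sum.inr (Sum.inl i) ∧ b = Sum.inr (Sum.inl j)) ∨
    (∃ i j : Fin n, (i : ℕ) + 1 = (j : ℕ) ∧ a = Sum.inr (Sum.inr i) ∧ b = Sum.inr (Sum.inr j)))

/-- `F⁽²⁾_n` : vertex `x₁ = inl ()`, `yᵢ = inr (inl i)`, `zᵢ = inr (inr i)`;
edges `x₁y₁`, `x₁z₁`, `y₁z₁`, and two paths `y₁⋯yₙ`, `z₁⋯zₙ`. -/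
def F2 (n : ℕ) : SimpleGraph (Unit ⊕ Fin n ⊕ Fin n) :=
  SimpleGraph.fromRel (fun a b =>
    (∃ j : Fin n, (j : ℕ) = 0 ∧ a = Sum.inl () ∧ b = Sum.inr (Sum.inl j)) ∨
    (∃ j : Fin n, (j : ℕ) = 0 ∧ a = Sum.inl () ∧ b = Sum.inr (Sum.inr j)) ∨
    (∃ i j : Fin n, (i : ℕ) = 0 ∧ (j : ℕ) = 0 ∧ a = Sum.inr (Sum.inl i) ∧ b = Sum.inr (Sum.inr j)) ∨
    (∃ i j : Fin n, (i : ℕ) + 1 = (j : ℕ) ∧ a = Sum.inr (Sum.inl i) ∧ b = Sum.inr (Sum.inl j)) ∨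
    (∃ i j : Fin n, (i : ℕ) + 1 = (j : ℕ) ∧ a = Sum.inr (Sum.inr i) ∧ b = Sum.inr (Sum.inr j)))

/-- `F⁽³⁾_n` : vertices `xᵢ = inl i`, `yᵢ = inr (inl i)`, `zᵢ = inr (inr i)`;
edges `xᵢy₁`, `xᵢz₁` for all `i`, and two paths `y₁⋯yₙ`, `z₁⋯zₙ`. -/
def F3 (n : ℕ) : SimpleGraph (Fin n ⊕ Fin n ⊕ Fin n) :=
  SimpleGraph.fromRel (fun a b =>
    (∃ (i j : Fin n), (j : ℕ) = 0 ∧ a = Sum.inl i ∧ b = Sum.inr (Sum.inl j)) ∨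
    (∃ (i j : Fin n), (j : ℕ) = 0 ∧ a = Sum.inl i ∧ b = Sum.inr (Sum.inr j)) ∨
    (∃ i j : Fin n, (i : ℕ) + 1 = (j : ℕ) ∧ a = Sum.inr (Sum.inl i) ∧ b = Sum.inr (Sum.inl j)) ∨
    (∃ i j : Fin n, (i : ℕ) + 1 = (j : ℕ) ∧ a = Sum.inr (Sum.inr i) ∧ b = Sum.inr (Sum.inr j)))

/-- `F⁽⁴⁾_n` : `F⁽³⁾_n` with only `x₁, x₂` kept (no edge `x₁x₂`). -/
def F4 (n : ℕ) : SimpleGraph (Fin 2 ⊕ Fin n ⊕ Fin n) :=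
  SimpleGraph.fromRel (fun a b =>
    (∃ (i : Fin 2) (j : Fin n), (j : ℕ) = 0 ∧ a = Sum.inl i ∧ b = Sum.inr (Sum.inl j)) ∨
    (∃ (i : Fin 2) (j : Fin n), (j : ℕ) = 0 ∧ a = Sum.inl i ∧ b = Sum.inr (Sum.inr j)) ∨
    (∃ i j : Fin n, (i : ℕ) + 1 = (j : ℕ) ∧ a = Sum.inr (Sum.inl i) ∧ b = Sum.inr (Sum.inl j)) ∨
    (∃ i j : Fin n, (i : ℕ) + 1 = (j : ℕ) ∧ a = Sum.inr (Sum.inr i) ∧ b = Sum.inr (Sum.inr j)))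

/-- `F⁽⁵⁾_n` : `F⁽⁴⁾_n` plus the edge `x₁x₂`. -/
def F5 (n : ℕ) : SimpleGraph (Fin 2 ⊕ Fin n ⊕ Fin n) :=
  SimpleGraph.fromRel (fun a b =>
    (a = Sum.inl 0 ∧ b = Sum.inl 1) ∨
    (∃ (i : Fin 2) (j : Fin n), (j : ℕ) = 0 ∧ a = Sum.inl i ∧ b = Sum.inr (Sum.inl j)) ∨
    (∃ (i : Fin 2) (j : Fin n), (j : ℕ) = 0 ∧ a = Sum.inl i ∧ b = Sum.inr (Sum.inr j)) ∨
    (∃ i j : Fin n, (i : ℕ) + 1 = (j : ℕ) ∧ a = Sum.inr (Sum.inl i) ∧ b = Sum.inr (Sum.inl j)) ∨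
    (∃ i j : Fin n, (i : ℕ) + 1 = (j : ℕ) ∧ a = Sum.inr (Sum.inr i) ∧ b = Sum.inr (Sum.inr j)))

/-- The Ramsey number `R(a,b)` : least `R` such that every simple graph on at least `R`
vertices contains a clique of size `a` or an independent set of size `b`. -/
noncomputable def ramseyNumber (a b : ℕ) : ℕ :=
  sInf {R : ℕ | ∀ (m : ℕ) (G : SimpleGraph (Fin m)), R ≤ m →
    (∃ s : Finset (Fin m), s.card = a ∧ ∀ u ∈ s, ∀ v ∈ s, u ≠ v → G.Adj u v) ∨
    (∃ s : Finset (Fin m), s.card = b ∧ ∀ u ∈ s, ∀ v ∈ s, u ≠ v → ¬ G.Adj u v)}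

/-- `ξ_{n,i} = ((R(n-1,n)-1)^i - 1)/(R(n-1,n)-2)`. -/
noncomputable def xi (n i : ℕ) : ℕ :=
  ((ramseyNumber (n - 1) n - 1) ^ i - 1) / (ramseyNumber (n - 1) n - 2)

set_option linter.unusedSectionVars false
namespace SPAux
variable {V : Type} [DecidableEq V]

open SimpleGraph





def CliqueOn (G : SimpleGraph V) (A : Finset V) : Prop :=
  ∀ x ∈ A, ∀ y ∈ A, x ≠ y → G.Adj x y

def IndepOn (G : SimpleGraph V) (A : Finset V) : Prop :=
  ∀ x ∈ A, ∀ y ∈ A, x ≠ y → ¬ G.Adj x y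

lemma cliqueOn_insert {G : SimpleGraph V} {a : V} {B : Finset V}
    (h1 : ∀ x ∈ B, G.Adj a x) (h2 : CliqueOn G B) : CliqueOn G (insert a B) := by
  intro x hx y hy hxy
  rcases Finset.mem_insert.1 hx with hx' | hx' <;> rcases Finset.mem_insert.1 hy with hy' | hy'
  · exact absurd (hx'.trans hy'.symm) hxy
  · exact hx' ▸ h1 y hy'
  · exact (hy' ▸ h1 x hx').symm
  · exact h2 x hx' y hy' hxy

lemma indepOn_insert {G : SimpleGraph V} {a : V} {B : Finset V}
    (h1 : ∀ x ∈ B, ¬ G.Adj a x) (h2 : IndepOn G B) : IndepOn G (insert a B) := by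
  intro x hx y hy hxy
  rcases Finset.mem_insert.1 hx with hx' | hx' <;> rcases Finset.mem_insert.1 hy with hy' | hy'
  · exact absurd (hx'.trans hy'.symm) hxy
  · exact hx' ▸ h1 y hy'
  · exact fun h => (hy' ▸ h1 x hx') h.symm
  · exact h2 x hx' y hy' hxy

lemma cliqueOn_subset {G : SimpleGraph V} {A B : Finset V} (h : B ⊆ A) (h2 : CliqueOn G A) :
    CliqueOn G B := fun x hx y hy hxy => h2 x (h hx) y (h hy) hxy

def RR : ℕ → ℕ → ℕ
  | 0, _ => 0
  | _+1, 0 => 0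
  | s+1, t+1 => RR s (t+1) + RR (s+1) t + 1

lemma RR_succ_succ (s t : ℕ) : RR (s+1) (t+1) = RR s (t+1) + RR (s+1) t + 1 := by
  simp [RR]

lemma ramsey (G : SimpleGraph V) : ∀ (s t : ℕ) (A : Finset V), RR s t ≤ A.card →
    (∃ B ⊆ A, B.card = s ∧ CliqueOn G B) ∨ (∃ B ⊆ A, B.card = t ∧ IndepOn G B) := by
  intro s
  induction s with
  | zero =>
    intro t A _
    exact Or.inl ⟨∅, by simp, by simp, by intro x hx; simp at hx⟩
  | succ s ihs =>
    intro t
    induction t with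
    | zero =>
      intro A _
      exact Or.inr ⟨∅, by simp, by simp, by intro x hx; simp at hx⟩
    | succ t iht =>
      intro A hA
      classical
      rw [RR_succ_succ] at hA
      have hAne : A.Nonempty := by rw [← Finset.card_pos]; omega
      obtain ⟨a, ha⟩ := hAne
      set A1 := (A.erase a).filter (fun x => G.Adj a x) with hA1
      set A2 := (A.erase a).filter (fun x => ¬ G.Adj a x) with hA2
      have hsplit : A1.card + A2.card = A.card - 1 := by
        have h := Finset.card_filter_add_card_filter_not
          (s := A.erase a) (p := fun x => G.Adj a x)
        rw [Finset.card_erase_of_mem ha] at h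
        exact h
      have hcase : RR s (t+1) ≤ A1.card ∨ RR (s+1) t ≤ A2.card := by omega
      have hA1sub : A1 ⊆ A := (Finset.filter_subset _ _).trans (Finset.erase_subset _ _)
      have hA2sub : A2 ⊆ A := (Finset.filter_subset _ _).trans (Finset.erase_subset _ _)
      have haA1 : a ∉ A1 := fun h => (Finset.mem_erase.1 (Finset.mem_of_mem_filter _ h)).1 rfl
      have haA2 : a ∉ A2 := fun h => (Finset.mem_erase.1 (Finset.mem_of_mem_filter _ h)).1 rfl
      rcases hcase with h1 | h2
      · rcases ihs (t+1) A1 h1 with ⟨B, hBA, hBc, hBcl⟩ | ⟨B, hBA, hBc, hBin⟩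
        · refine Or.inl ⟨insert a B, ?_, ?_, ?_⟩
          · exact Finset.insert_subset ha (hBA.trans hA1sub)
          · rw [Finset.card_insert_of_notMem (fun h => haA1 (hBA h)), hBc]
          · exact cliqueOn_insert (fun x hx => (Finset.mem_filter.1 (hBA hx)).2) hBcl
        · exact Or.inr ⟨B, hBA.trans hA1sub, hBc, hBin⟩
      · rcases iht A2 h2 with ⟨B, hBA, hBc, hBcl⟩ | ⟨B, hBA, hBc, hBin⟩
        · exact Or.inl ⟨B, hBA.trans hA2sub, hBc, hBcl⟩
        · refine Or.inr ⟨insert a B, ?_, ?_, ?_⟩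
          · exact Finset.insert_subset ha (hBA.trans hA2sub)
          · rw [Finset.card_insert_of_notMem (fun h => haA2 (hBA h)), hBc]
          · exact indepOn_insert (fun x hx => (Finset.mem_filter.1 (hBA hx)).2) hBin

lemma RR_pos {s t : ℕ} (hs : 1 ≤ s) (ht : 1 ≤ t) : 1 ≤ RR s t := by
  obtain ⟨s, rfl⟩ := Nat.exists_eq_add_of_le hs
  obtain ⟨t, rfl⟩ := Nat.exists_eq_add_of_le ht
  rw [Nat.add_comm 1 s, Nat.add_comm 1 t, RR_succ_succ]
  omega


lemma copy_complete {G : SimpleGraph V} {B : Finset V} {n : ℕ} (hB : CliqueOn G B)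
    (hc : B.card = n) : HasInducedCopy G (completeGraph (Fin n)) := by
  have e : Fin n ≃ {x // x ∈ B} := (finCongr hc.symm).trans (Finset.equivFin B).symm
  refine ⟨⟨fun i => (e i : V), fun i j h => e.injective (Subtype.ext h)⟩, fun a b => ?_⟩
  simp only [Function.Embedding.coeFn_mk, completeGraph, top_adj]
  constructor
  · intro h hab
    exact G.ne_of_adj h (by rw [hab])
  · intro hab
    exact hB _ (e a).2 _ (e b).2 (fun h => hab (e.injective (Subtype.ext h)))

/-- induced matching of size `k` inside `T` -/
def HasIM (G : SimpleGraph V) (T : Finset V) (k : ℕ) : Prop :=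
  ∃ y z : Fin k → V,
    (∀ i, y i ∈ T) ∧ (∀ i, z i ∈ T) ∧ (∀ i, G.Adj (y i) (z i)) ∧
    (∀ i j, i ≠ j → y i ≠ y j) ∧ (∀ i j, i ≠ j → z i ≠ z j) ∧
    (∀ i j, y i ≠ z j) ∧
    (∀ i j, i ≠ j → ¬ G.Adj (y i) (y j)) ∧ (∀ i j, i ≠ j → ¬ G.Adj (z i) (z j)) ∧
    (∀ i j, i ≠ j → ¬ G.Adj (y i) (z j))

lemma copy_stilde {G : SimpleGraph V} {x : V} {T : Finset V} {n : ℕ}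
    (hT : ∀ t ∈ T, G.Adj x t) (h : HasIM G T n) : HasInducedCopy G (STilde n) := by
  obtain ⟨y, z, hyT, hzT, hadj, hyy, hzz, hyz, hAyy, hAzz, hAyz⟩ := h
  have hxy : ∀ i, G.Adj x (y i) := fun i => hT _ (hyT i)
  have hxz : ∀ i, G.Adj x (z i) := fun i => hT _ (hzT i)
  have hinj : Function.Injective (Sum.elim (fun _ : Unit => x) (Sum.elim y z)) := by
    rintro (⟨⟩ | a | a) (⟨⟩ | b | b) hab <;> simp only [Sum.elim_inl, Sum.elim_inr] at hab
    · rfl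
    · exact absurd hab (G.ne_of_adj (hxy b))
    · exact absurd hab (G.ne_of_adj (hxz b))
    · exact absurd hab.symm (G.ne_of_adj (hxy a))
    · rcases eq_or_ne a b with rfl | hne
      · rfl
      · exact absurd hab (hyy a b hne)
    · exact absurd hab (hyz a b)
    · exact absurd hab.symm (G.ne_of_adj (hxz a))
    · exact absurd hab.symm (hyz b a)
    · rcases eq_or_ne a b with rfl | hne
      · rfl
      · exact absurd hab (hzz a b hne)
  refine ⟨⟨_, hinj⟩, ?_⟩
  rintro (⟨⟩ | a | a) (⟨⟩ | b | b) <;>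
    simp only [Function.Embedding.coeFn_mk, Sum.elim_inl, Sum.elim_inr, STilde, fromRel_adj] <;>
    simp only [ne_eq, Sum.inl.injEq, Sum.inr.injEq, reduceCtorEq, false_and, and_false,
      exists_false, exists_eq_left, or_false, false_or, exists_const, not_false_eq_true,
      true_and, and_true, exists_and_left, exists_eq_right']
  · simp [G.irrefl]
  · simp [hxy b]
  · simp [hxz b]
  · simp [(hxy a).symm]
  · constructor
    · intro hadj'
      rcases eq_or_ne a b with rfl | hne
      · exact absurd hadj' (G.irrefl)
      · exact absurd hadj' (hAyy a b hne)
    · intro h; exact absurd h (by simp)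
  · constructor
    · intro hadj'
      rcases eq_or_ne a b with rfl | hne
      · simp
      · exact absurd hadj' (hAyz a b hne)
    · intro h
      have hb : a = b := by tauto
      subst hb; exact hadj a
  · simp [(hxz a).symm]
  · constructor
    · intro hadj'
      rcases eq_or_ne b a with rfl | hne
      · simp
      · exact absurd hadj'.symm (hAyz b a hne)
    · intro h
      have hb : b = a := by tauto
      subst hb; exact (hadj b).symm
  · constructor
    · intro hadj'
      rcases eq_or_ne a b with rfl | hne
      · exact absurd hadj' (G.irrefl)
      · exact absurd hadj' (hAzz a b hne)
    · intro h; exact absurd h (by simp)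
lemma copy_sstar {G : SimpleGraph V} {x : V} {n : ℕ} {y z : Fin n → V}
    (hxy : ∀ i, G.Adj x (y i))
    (hadj : ∀ i, G.Adj (y i) (z i))
    (hxz : ∀ i, ¬ G.Adj x (z i))
    (hxzne : ∀ i, x ≠ z i)
    (hyy : ∀ i j, i ≠ j → y i ≠ y j)
    (hzz : ∀ i j, i ≠ j → z i ≠ z j)
    (hyzne : ∀ i j, y i ≠ z j)
    (hAyy : ∀ i j, i ≠ j → ¬ G.Adj (y i) (y j))
    (hAzz : ∀ i j, i ≠ j → ¬ G.Adj (z i) (z j))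
    (hAyz : ∀ i j, i ≠ j → ¬ G.Adj (y i) (z j)) :
    HasInducedCopy G (SStar n) := by
  have hinj : Function.Injective (Sum.elim (fun _ : Unit => x) (Sum.elim y z)) := by
    rintro (⟨⟩ | a | a) (⟨⟩ | b | b) hab <;> simp only [Sum.elim_inl, Sum.elim_inr] at hab
    · rfl
    · exact absurd hab (G.ne_of_adj (hxy b))
    · exact absurd hab (hxzne b)
    · exact absurd hab.symm (G.ne_of_adj (hxy a))
    · rcases eq_or_ne a b with rfl | hne
      · rfl
      · exact absurd hab (hyy a b hne)
    · exact absurd hab (hyzne a b)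
    · exact absurd hab.symm (hxzne a)
    · exact absurd hab.symm (hyzne b a)
    · rcases eq_or_ne a b with rfl | hne
      · rfl
      · exact absurd hab (hzz a b hne)
  refine ⟨⟨_, hinj⟩, ?_⟩
  rintro (⟨⟩ | a | a) (⟨⟩ | b | b) <;>
    simp only [Function.Embedding.coeFn_mk, Sum.elim_inl, Sum.elim_inr, SStar, fromRel_adj] <;>
    simp only [ne_eq, Sum.inl.injEq, Sum.inr.injEq, reduceCtorEq, false_and, and_false,
      exists_false, exists_eq_left, or_false, false_or, exists_const, not_false_eq_true,
      true_and, and_true, exists_and_left, exists_eq_right']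
  · simp [G.irrefl]
  · simp [hxy b]
  · simp [hxz b, hxzne b]
  · simp [(hxy a).symm]
  · constructor
    · intro hadj'
      rcases eq_or_ne a b with rfl | hne
      · exact absurd hadj' (G.irrefl)
      · exact absurd hadj' (hAyy a b hne)
    · intro h; exact absurd h (by simp)
  · constructor
    · intro hadj'
      rcases eq_or_ne a b with rfl | hne
      · simp
      · exact absurd hadj' (hAyz a b hne)
    · intro h
      have hb : a = b := by tauto
      subst hb; exact hadj a
  · constructor
    · intro hadj'
      exact absurd hadj'.symm (hxz a)
    · intro h; exact absurd h (by simp [(hxzne a)])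
  · constructor
    · intro hadj'
      rcases eq_or_ne b a with rfl | hne
      · simp
      · exact absurd hadj'.symm (hAyz b a hne)
    · intro h
      have hb : b = a := by tauto
      subst hb; exact (hadj b).symm
  · constructor
    · intro hadj'
      rcases eq_or_ne a b with rfl | hne
      · exact absurd hadj' (G.irrefl)
      · exact absurd hadj' (hAzz a b hne)
    · intro h; exact absurd h (by simp)
lemma hasIM_of_edge {G : SimpleGraph V} {T : Finset V} {u v : V} (hu : u ∈ T) (hv : v ∈ T)
    (h : G.Adj u v) : HasIM G T 1 := by
  refine ⟨fun _ => u, fun _ => v, fun _ => hu, fun _ => hv, fun _ => h, ?_, ?_, ?_, ?_, ?_, ?_⟩ <;>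
    intro i j <;> first
      | (intro hij; exact absurd (Subsingleton.elim i j) hij)
      | (exact G.ne_of_adj h)

lemma edgeDom {G : SimpleGraph V} : ∀ (k : ℕ) (T : Finset V), ¬ HasIM G T (k+1) →
    ∃ W : Finset V, W ⊆ T ∧ W.card ≤ 2*k ∧
      ∀ u ∈ T, ∀ v ∈ T, u ∉ W → v ∉ W → (∀ w ∈ W, ¬ G.Adj w u) → (∀ w ∈ W, ¬ G.Adj w v) →
        u ≠ v → ¬ G.Adj u v := by
  intro k
  induction k with
  | zero =>
    intro T hT
    refine ⟨∅, by simp, by simp, ?_⟩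
    intro u hu v hv _ _ _ _ _ hadj
    exact hT (hasIM_of_edge hu hv hadj)
  | succ k ih =>
    intro T hT
    classical
    by_cases hedge : ∃ u ∈ T, ∃ v ∈ T, G.Adj u v
    · obtain ⟨u, hu, v, hv, huv⟩ := hedge
      set T' := T.filter (fun t => ¬ G.Adj u t ∧ ¬ G.Adj v t ∧ t ≠ u ∧ t ≠ v) with hT'def
      have hmem : ∀ t ∈ T', t ∈ T ∧ ¬ G.Adj u t ∧ ¬ G.Adj v t ∧ t ≠ u ∧ t ≠ v := by
        intro t ht
        have := Finset.mem_filter.1 ht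
        tauto
      have hIM' : ¬ HasIM G T' (k+1) := by
        rintro ⟨y, z, hyT, hzT, hadj, hyy, hzz, hyz, hAyy, hAzz, hAyz⟩
        apply hT
        refine ⟨Fin.cons u y, Fin.cons v z, ?_, ?_, ?_, ?_, ?_, ?_, ?_, ?_, ?_⟩
        · intro i
          rcases Fin.eq_zero_or_eq_succ i with rfl | ⟨i', rfl⟩
          · simpa using hu
          · simpa using (hmem _ (hyT i')).1
        · intro i
          rcases Fin.eq_zero_or_eq_succ i with rfl | ⟨i', rfl⟩
          · simpa using hv
          · simpa using (hmem _ (hzT i')).1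
        · intro i
          rcases Fin.eq_zero_or_eq_succ i with rfl | ⟨i', rfl⟩
          · simpa using huv
          · simpa using hadj i'
        · intro i j hij
          rcases Fin.eq_zero_or_eq_succ i with rfl | ⟨i', rfl⟩ <;>
            rcases Fin.eq_zero_or_eq_succ j with rfl | ⟨j', rfl⟩
          · exact absurd rfl hij
          · simpa using ((hmem _ (hyT j')).2.2.2.1).symm
          · simpa using (hmem _ (hyT i')).2.2.2.1
          · have : i' ≠ j' := by simpa using hij
            simpa using hyy i' j' this
        · intro i j hij
          rcases Fin.eq_zero_or_eq_succ i with rfl | ⟨i', rfl⟩ <;>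
            rcases Fin.eq_zero_or_eq_succ j with rfl | ⟨j', rfl⟩
          · exact absurd rfl hij
          · simpa using ((hmem _ (hzT j')).2.2.2.2).symm
          · simpa using (hmem _ (hzT i')).2.2.2.2
          · have : i' ≠ j' := by simpa using hij
            simpa using hzz i' j' this
        · intro i j
          rcases Fin.eq_zero_or_eq_succ i with rfl | ⟨i', rfl⟩ <;>
            rcases Fin.eq_zero_or_eq_succ j with rfl | ⟨j', rfl⟩
          · simpa using G.ne_of_adj huv
          · simpa using ((hmem _ (hzT j')).2.2.2.1).symm
          · simpa using (hmem _ (hyT i')).2.2.2.2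
          · simpa using hyz i' j'
        · intro i j hij
          rcases Fin.eq_zero_or_eq_succ i with rfl | ⟨i', rfl⟩ <;>
            rcases Fin.eq_zero_or_eq_succ j with rfl | ⟨j', rfl⟩
          · exact absurd rfl hij
          · simpa using (hmem _ (hyT j')).2.1
          · simpa using (fun h => (hmem _ (hyT i')).2.1 h.symm)
          · have : i' ≠ j' := by simpa using hij
            simpa using hAyy i' j' this
        · intro i j hij
          rcases Fin.eq_zero_or_eq_succ i with rfl | ⟨i', rfl⟩ <;>
            rcases Fin.eq_zero_or_eq_succ j with rfl | ⟨j', rfl⟩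
          · exact absurd rfl hij
          · simpa using (hmem _ (hzT j')).2.2.1
          · simpa using (fun h => (hmem _ (hzT i')).2.2.1 h.symm)
          · have : i' ≠ j' := by simpa using hij
            simpa using hAzz i' j' this
        · intro i j hij
          rcases Fin.eq_zero_or_eq_succ i with rfl | ⟨i', rfl⟩ <;>
            rcases Fin.eq_zero_or_eq_succ j with rfl | ⟨j', rfl⟩
          · exact absurd rfl hij
          · simpa using (hmem _ (hzT j')).2.1
          · simpa using (fun h => (hmem _ (hyT i')).2.2.1 h.symm)
          · have : i' ≠ j' := by simpa using hij
            simpa using hAyz i' j' this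
      obtain ⟨W', hW'sub, hW'card, hW'free⟩ := ih T' hIM'
      refine ⟨insert u (insert v W'), ?_, ?_, ?_⟩
      · refine Finset.insert_subset hu (Finset.insert_subset hv ?_)
        exact fun t ht => (hmem _ (hW'sub ht)).1
      · calc (insert u (insert v W')).card ≤ (insert v W').card + 1 :=
              Finset.card_insert_le _ _
          _ ≤ W'.card + 1 + 1 := by
              have := Finset.card_insert_le v W'; omega
          _ ≤ 2 * (k+1) := by omega
      · intro a ha b hb haW hbW hfa hfb hab
        have hamem : a ∈ T' := by
          refine Finset.mem_filter.2 ⟨ha, ?_, ?_, ?_, ?_⟩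
          · exact hfa u (by simp)
          · exact hfa v (by simp)
          · exact fun h => haW (by simp [h])
          · exact fun h => haW (by simp [h])
        have hbmem : b ∈ T' := by
          refine Finset.mem_filter.2 ⟨hb, ?_, ?_, ?_, ?_⟩
          · exact hfb u (by simp)
          · exact hfb v (by simp)
          · exact fun h => hbW (by simp [h])
          · exact fun h => hbW (by simp [h])
        refine hW'free a hamem b hbmem ?_ ?_ ?_ ?_ hab
        · exact fun h => haW (by simp [h])
        · exact fun h => hbW (by simp [h])
        · exact fun w hw => hfa w (by simp [hw])
        · exact fun w hw => hfb w (by simp [hw])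
    · push_neg at hedge
      refine ⟨∅, by simp, by simp, ?_⟩
      intro a ha b hb _ _ _ _ _ hadj
      exact hedge a ha b hb hadj
lemma star_set {G : SimpleGraph V} {c : V} {Z : Finset V} (hne : Z.Nonempty) (hcZ : c ∉ Z)
    (hadj : ∀ z ∈ Z, G.Adj c z) (hind : ∀ z ∈ Z, ∀ z' ∈ Z, z ≠ z' → ¬ G.Adj z z') :
    IsInducedStarSet G (insert c (↑Z : Set V)) := by
  refine ⟨Z.card, Finset.card_pos.2 hne, ?_⟩
  set S : Set V := insert c (↑Z : Set V) with hS
  have hcS : c ∈ S := Set.mem_insert _ _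
  have hZS : ∀ z ∈ Z, (z : V) ∈ S := fun z hz => Set.mem_insert_of_mem _ (by exact_mod_cast hz)
  set ψ : Unit ⊕ Fin Z.card → S :=
    Sum.elim (fun _ => ⟨c, hcS⟩)
      (fun i => ⟨(Z.equivFin.symm i : V), hZS _ (Z.equivFin.symm i).2⟩) with hψ
  have hbij : Function.Bijective ψ := by
    constructor
    · rintro (⟨⟩ | a) (⟨⟩ | b) hab <;> simp only [hψ, Sum.elim_inl, Sum.elim_inr,
        Subtype.mk.injEq] at hab
      · rfl
      · exact absurd (hab ▸ (Z.equivFin.symm b).2) hcZ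
      · exact absurd (hab ▸ (Z.equivFin.symm a).2) hcZ
      · have := Z.equivFin.symm.injective (Subtype.ext hab)
        rw [this]
    · rintro ⟨v, hv⟩
      rcases hv with rfl | hv
      · exact ⟨Sum.inl (), rfl⟩
      · have hvZ : v ∈ Z := by exact_mod_cast hv
        refine ⟨Sum.inr (Z.equivFin ⟨v, hvZ⟩), ?_⟩
        simp [hψ]
  have hiso : _root_.starGraph Z.card ≃g G.induce S := by
    refine ⟨Equiv.ofBijective ψ hbij, ?_⟩
    rintro (⟨⟩ | a) (⟨⟩ | b) <;>
      simp only [Equiv.ofBijective_apply, hψ, Sum.elim_inl, Sum.elim_inr, comap_adj,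
        Function.Embedding.coe_subtype, _root_.starGraph, completeBipartiteGraph_adj, induce] <;>
      simp only [Sum.isLeft_inl, Sum.isRight_inr, Sum.isRight_inl, Sum.isLeft_inr,
        and_true, true_and, and_false, false_and, or_false, false_or, or_self, iff_false,
        iff_true]
    · simp [G.irrefl]
    · simp [hadj _ (Z.equivFin.symm b).2]
    · simp [(hadj _ (Z.equivFin.symm a).2).symm]
    · have hnadj : ¬ G.Adj ((Z.equivFin.symm a : V)) ((Z.equivFin.symm b : V)) := by
        intro hadj'
        rcases eq_or_ne a b with rfl | hne
        · exact G.irrefl hadj'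
        · refine hind _ (Z.equivFin.symm a).2 _ (Z.equivFin.symm b).2 ?_ hadj'
          intro h
          exact hne (by simpa using Z.equivFin.symm.injective (Subtype.ext h))
      simp [hnadj]
  exact ⟨hiso.symm⟩
lemma dist_le_adj {G : SimpleGraph V} (hconn : G.Connected) {r u v : V} (h : G.Adj u v) :
    G.dist r v ≤ G.dist r u + 1 := by
  have ht := hconn.dist_triangle (u := r) (v := u) (w := v)
  rwa [dist_eq_one_iff_adj.2 h] at ht

lemma layer_pred {G : SimpleGraph V} (hconn : G.Connected) {r v : V} {i : ℕ}
    (h : G.dist r v = i + 1) : ∃ u, G.Adj u v ∧ G.dist r u = i := by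
  obtain ⟨p, hp⟩ := hconn.exists_walk_length_eq_dist r v
  have hvr : v ≠ r := by
    rintro rfl
    rw [SimpleGraph.dist_self] at h
    omega
  obtain ⟨w, hadj, q, hq⟩ := SimpleGraph.Walk.exists_eq_cons_of_ne hvr p.reverse
  have hlen : q.length = i := by
    have h1 : p.reverse.length = i + 1 := by rw [SimpleGraph.Walk.length_reverse, hp, h]
    rw [hq] at h1
    simpa using h1
  have h1 : G.dist r w ≤ i := by
    have := SimpleGraph.dist_le q.reverse
    rwa [SimpleGraph.Walk.length_reverse, hlen] at this
  have h2 : i ≤ G.dist r w := by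
    have := dist_le_adj hconn (r := r) hadj.symm
    omega
  exact ⟨w, hadj.symm, le_antisymm h1 h2⟩
lemma layers [Fintype V] {G : SimpleGraph V} (hconn : G.Connected) {n : ℕ} (hn : 3 ≤ n)
    (hclq : ∀ B : Finset V, CliqueOn G B → B.card ≠ n)
    (hsstar : ¬ HasInducedCopy G (SStar n)) (r : V) :
    ∀ i : ℕ, ∃ D : Finset V, (∀ d ∈ D, G.dist r d = i) ∧
      D.card ≤ (RR (n-1) (RR n n)) ^ (i+1) ∧
      ∀ v, G.dist r v = i + 1 → ∃ d ∈ D, G.Adj d v := by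
  classical
  set K := RR (n-1) (RR n n) with hK
  have hK1 : 1 ≤ K := RR_pos (by omega) (RR_pos (by omega) (by omega))
  intro i
  induction i with
  | zero =>
    refine ⟨{r}, by simp, by simpa using hK1, ?_⟩
    intro v hv
    exact ⟨r, Finset.mem_singleton_self r, dist_eq_one_iff_adj.1 hv⟩
  | succ i ih =>
    obtain ⟨D, hDdist, hDcard, hDdom⟩ := ih
    set Dom : Finset V → Prop := fun B =>
      (∀ b ∈ B, G.dist r b = i + 1) ∧ ∀ v, G.dist r v = i + 2 → ∃ b ∈ B, G.Adj b v with hDom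
    have h0 : Dom (Finset.univ.filter (fun b => G.dist r b = i + 1)) := by
      constructor
      · intro b hb; exact (Finset.mem_filter.1 hb).2
      · intro v hv
        obtain ⟨u, hu, hud⟩ := layer_pred hconn hv
        exact ⟨u, Finset.mem_filter.2 ⟨Finset.mem_univ _, hud⟩, hu⟩
    have hFne : ((Finset.univ : Finset (Finset V)).filter Dom).Nonempty :=
      ⟨_, Finset.mem_filter.2 ⟨Finset.mem_univ _, h0⟩⟩
    obtain ⟨B, hBmem, hBmin⟩ := Finset.exists_min_image _ Finset.card hFne
    have hBDom : Dom B := (Finset.mem_filter.1 hBmem).2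
    -- privacy
    have hpriv : ∀ b ∈ B, ∃ z, G.dist r z = i + 2 ∧ G.Adj b z ∧
        ∀ b' ∈ B, b' ≠ b → ¬ G.Adj b' z := by
      intro b hb
      by_contra hcon
      push_neg at hcon
      have herase : Dom (B.erase b) := by
        constructor
        · intro b' hb'; exact hBDom.1 b' (Finset.mem_of_mem_erase hb')
        · intro v hv
          obtain ⟨b'', hb'', hadj⟩ := hBDom.2 v hv
          rcases eq_or_ne b'' b with rfl | hne
          · obtain ⟨b', hb', hbb', hadj'⟩ := hcon v hv hadj
            exact ⟨b', Finset.mem_erase.2 ⟨hbb', hb'⟩, hadj'⟩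
          · exact ⟨b'', Finset.mem_erase.2 ⟨hne, hb''⟩, hadj⟩
      have := hBmin (B.erase b) (Finset.mem_filter.2 ⟨Finset.mem_univ _, herase⟩)
      rw [Finset.card_erase_of_mem hb] at this
      have hpos : 0 < B.card := Finset.card_pos.2 ⟨b, hb⟩
      omega
    -- per-dominator bound
    have hper : ∀ d ∈ D, (B.filter (fun b => G.Adj d b)).card ≤ K - 1 := by
      intro d hd
      by_contra hcon
      have hcard : K ≤ (B.filter (fun b => G.Adj d b)).card := by omega
      set A := B.filter (fun b => G.Adj d b) with hA
      have hAB : A ⊆ B := Finset.filter_subset _ _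
      have hAd : ∀ a ∈ A, G.Adj d a := fun a ha => (Finset.mem_filter.1 ha).2
      have hAdist : ∀ a ∈ A, G.dist r a = i + 1 := fun a ha => hBDom.1 a (hAB ha)
      rcases ramsey G (n-1) (RR n n) A hcard with ⟨B', hB'A, hB'c, hB'cl⟩ | ⟨S, hSA, hSc, hSin⟩
      · -- clique of size n-1 + d = K_n
        have hdB' : d ∉ B' := by
          intro hmem
          have h1 := hAdist d (hB'A hmem)
          have h2 := hDdist d hd
          omega
        have hclq' : CliqueOn G (insert d B') :=
          cliqueOn_insert (fun x hx => hAd x (hB'A hx)) hB'cl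
        have hcard' : (insert d B').card = n := by
          rw [Finset.card_insert_of_notMem hdB', hB'c]
          omega
        exact hclq _ hclq' hcard'
      · -- independent set with private neighbours gives SStar
        have hzex : ∀ b : V, ∃ z, b ∈ S → (G.dist r z = i + 2 ∧ G.Adj b z ∧
            ∀ b' ∈ B, b' ≠ b → ¬ G.Adj b' z) := by
          intro b
          by_cases hb : b ∈ S
          · obtain ⟨z, hz⟩ := hpriv b (hAB (hSA hb))
            exact ⟨z, fun _ => hz⟩
          · exact ⟨b, fun h => absurd h hb⟩
        choose zf hzf using hzex
        have hzinj : ∀ b ∈ S, ∀ b' ∈ S, zf b = zf b' → b = b' := by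
          intro b hb b' hb' heq
          by_contra hne
          exact (hzf b hb).2.2 b' (hAB (hSA hb')) (Ne.symm hne) (heq ▸ (hzf b' hb').2.1)
        have hZc : (S.image zf).card = RR n n := by
          rw [Finset.card_image_of_injOn (fun b hb b' hb' => hzinj b hb b' hb'), hSc]
        rcases ramsey G n n (S.image zf) (le_of_eq hZc.symm) with
          ⟨C, hCA, hCc, hCcl⟩ | ⟨C, hCA, hCc, hCin⟩
        · exact hclq _ hCcl hCc
        · -- pull back to S
          set S' := S.filter (fun b => zf b ∈ C) with hS'
          have hS'S : S' ⊆ S := Finset.filter_subset _ _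
          have himg : S'.image zf = C := by
            apply Finset.Subset.antisymm
            · intro c hc
              obtain ⟨b, hb, rfl⟩ := Finset.mem_image.1 hc
              exact (Finset.mem_filter.1 hb).2
            · intro c hc
              obtain ⟨b, hb, rfl⟩ := Finset.mem_image.1 (hCA hc)
              exact Finset.mem_image.2 ⟨b, Finset.mem_filter.2 ⟨hb, hc⟩, rfl⟩
          have hS'c : S'.card = n := by
            have := Finset.card_image_of_injOn
              (fun b hb b' hb' => hzinj b (hS'S hb) b' (hS'S hb'))
            rw [himg, hCc] at this
            omega
          have e : Fin n ≃ {x // x ∈ S'} := (finCongr hS'c.symm).trans (Finset.equivFin S').symm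
          set y : Fin n → V := fun j => (e j : V) with hy
          have hyS' : ∀ j, y j ∈ S' := fun j => (e j).2
          have hyinj : ∀ j j' : Fin n, j ≠ j' → y j ≠ y j' := by
            intro j j' hne heq
            exact hne (e.injective (Subtype.ext heq))
          have hyB : ∀ j, y j ∈ B := fun j => hAB (hSA (hS'S (hyS' j)))
          have hyd : ∀ j, G.dist r (y j) = i + 1 := fun j => hAdist _ (hSA (hS'S (hyS' j)))
          have hzd : ∀ j, G.dist r (zf (y j)) = i + 2 :=
            fun j => (hzf _ (hS'S (hyS' j))).1
          have hzC : ∀ j, zf (y j) ∈ C := fun j => (Finset.mem_filter.1 (hyS' j)).2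
          apply hsstar
          refine copy_sstar (x := d) (y := y) (z := fun j => zf (y j))
            ?_ ?_ ?_ ?_ ?_ ?_ ?_ ?_ ?_ ?_
          · exact fun j => hAd _ (hSA (hS'S (hyS' j)))
          · exact fun j => (hzf _ (hS'S (hyS' j))).2.1
          · intro j hadj
            have h1 := dist_le_adj hconn (r := r) hadj
            have h2 := hDdist d hd
            have h3 := hzd j
            omega
          · intro j heq
            have h2 := hDdist d hd
            have h3 := hzd j
            rw [← heq] at h3
            omega
          · exact hyinj
          · intro j j' hne heq
            exact (hyinj j j' hne) (hzinj _ (hS'S (hyS' j)) _ (hS'S (hyS' j')) heq)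
          · intro j j' heq
            have h1 := hyd j
            have h2 := hzd j'
            rw [heq] at h1
            omega
          · intro j j' hne
            exact hSin _ (hS'S (hyS' j)) _ (hS'S (hyS' j')) (hyinj j j' hne)
          · intro j j' hne
            refine hCin _ (hzC j) _ (hzC j') ?_
            intro heq
            exact hyinj j j' hne (hzinj _ (hS'S (hyS' j)) _ (hS'S (hyS' j')) heq)
          · intro j j' hne
            intro hadj
            exact (hzf _ (hS'S (hyS' j'))).2.2 (y j) (hyB j) (hyinj j j' hne) hadj
    -- assemble the bound
    have hsub : B ⊆ D.biUnion (fun d => B.filter (fun b => G.Adj d b)) := by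
      intro b hb
      obtain ⟨d, hd, hadj⟩ := hDdom b (hBDom.1 b hb)
      exact Finset.mem_biUnion.2 ⟨d, hd, Finset.mem_filter.2 ⟨hb, hadj⟩⟩
    have hcard : B.card ≤ K ^ (i + 2) := by
      calc B.card ≤ (D.biUnion (fun d => B.filter (fun b => G.Adj d b))).card :=
            Finset.card_le_card hsub
        _ ≤ ∑ d ∈ D, (B.filter (fun b => G.Adj d b)).card := Finset.card_biUnion_le
        _ ≤ ∑ _d ∈ D, (K - 1) := Finset.sum_le_sum hper
        _ = D.card * (K - 1) := by rw [Finset.sum_const, smul_eq_mul]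
        _ ≤ K ^ (i+1) * K := by
            apply Nat.mul_le_mul hDcard
            omega
        _ = K ^ (i+2) := by ring
    exact ⟨B, hBDom.1, hcard, hBDom.2⟩
def gfun (n : ℕ) : ℕ → ℕ
  | 0 => 1
  | k+1 => 1 + 2*n*(gfun n k)

lemma cover {G : SimpleGraph V} {n : ℕ}
    (hclq : ∀ B : Finset V, CliqueOn G B → B.card ≠ n)
    (hIM : ∀ (x : V) (T : Finset V), (∀ t ∈ T, G.Adj x t) → ¬ HasIM G T n)
    (hn : 3 ≤ n) :
    ∀ (k : ℕ) (C : Finset V) (c : V) (T : Finset V), c ∈ C → CliqueOn G C →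
      (∀ x ∈ C, ∀ t ∈ T, G.Adj x t) → n ≤ C.card + k + 1 →
      ∃ P : Finset (Set V), P.card ≤ gfun n k ∧
        (∀ S ∈ P, IsInducedStarSet G S ∨ IsSingletonSet S) ∧
        (∀ S ∈ P, S ⊆ insert c (↑T : Set V)) ∧
        (∀ v ∈ insert c (↑T : Set V), ∃ S ∈ P, v ∈ S) ∧
        (∀ S ∈ P, ∀ S' ∈ P, S ≠ S' → ∀ v ∈ S, v ∉ S') := by
  intro k
  induction k with
  | zero =>
    intro C c T hc hCclq hCT hcard
    have hTempty : ∀ t, t ∉ T := by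
      intro t ht
      have htC : t ∉ C := fun h => G.irrefl (hCT t h t ht)
      have hclq' : CliqueOn G (insert t C) :=
        cliqueOn_insert (fun x hx => (hCT x hx t ht).symm) hCclq
      have hcard' : n ≤ (insert t C).card := by
        rw [Finset.card_insert_of_notMem htC]
        omega
      obtain ⟨B, hBsub, hBcard⟩ := Finset.exists_subset_card_eq hcard'
      exact hclq B (cliqueOn_subset hBsub hclq') hBcard
    refine ⟨{{c}}, by simp [gfun], ?_, ?_, ?_, ?_⟩
    · intro S hS
      rw [Finset.mem_singleton] at hS
      exact Or.inr ⟨c, hS⟩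
    · intro S hS
      rw [Finset.mem_singleton] at hS
      subst hS
      intro v hv
      rw [Set.mem_singleton_iff] at hv
      exact hv ▸ Set.mem_insert _ _
    · intro v hv
      rcases Set.mem_insert_iff.1 hv with hvc | hv
      · exact ⟨{c}, Finset.mem_singleton_self _, Set.mem_singleton_iff.2 hvc⟩
      · exact absurd (by exact_mod_cast hv) (hTempty v)
    · intro S hS S' hS' hne
      rw [Finset.mem_singleton] at hS hS'
      exact absurd (hS.trans hS'.symm) hne
  | succ k ih =>
    intro C c T hc hCclq hCT hcard
    classical
    have hTadj : ∀ t ∈ T, G.Adj c t := hCT c hc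
    have hcT : c ∉ T := fun h => G.irrefl (hTadj c h)
    have hnIM : ¬ HasIM G T ((n-1)+1) := by
      have : (n-1)+1 = n := by omega
      rw [this]
      exact hIM c T hTadj
    obtain ⟨W, hWT, hWcard, hWfree⟩ := edgeDom (n-1) T hnIM
    set Z := T.filter (fun t => t ∉ W ∧ ∀ w ∈ W, ¬ G.Adj w t) with hZdef
    set Rst := T.filter (fun t => t ∉ W ∧ ∃ w ∈ W, G.Adj w t) with hRdef
    have hsplit : ∀ t ∈ T, t ∈ W ∨ t ∈ Z ∨ t ∈ Rst := by
      intro t ht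
      by_cases htW : t ∈ W
      · exact Or.inl htW
      by_cases hadj : ∃ w ∈ W, G.Adj w t
      · exact Or.inr (Or.inr (Finset.mem_filter.2 ⟨ht, htW, hadj⟩))
      · push_neg at hadj
        exact Or.inr (Or.inl (Finset.mem_filter.2 ⟨ht, htW, hadj⟩))
    have hwex : ∀ t : V, ∃ w, t ∈ Rst → (w ∈ W ∧ G.Adj w t) := by
      intro t
      by_cases ht : t ∈ Rst
      · obtain ⟨w, hw, hadj⟩ := (Finset.mem_filter.1 ht).2.2
        exact ⟨w, fun _ => ⟨hw, hadj⟩⟩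
      · exact ⟨t, fun h => absurd h ht⟩
    choose wf hwf using hwex
    -- children
    have hchild : ∀ w : V, ∃ Pw : Finset (Set V), w ∈ W →
        (Pw.card ≤ gfun n k ∧
         (∀ S ∈ Pw, IsInducedStarSet G S ∨ IsSingletonSet S) ∧
         (∀ S ∈ Pw, S ⊆ insert w (↑(Rst.filter (fun t => wf t = w)) : Set V)) ∧
         (∀ v ∈ insert w (↑(Rst.filter (fun t => wf t = w)) : Set V), ∃ S ∈ Pw, v ∈ S) ∧
         (∀ S ∈ Pw, ∀ S' ∈ Pw, S ≠ S' → ∀ v ∈ S, v ∉ S')) := by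
      intro w
      by_cases hw : w ∈ W
      · have hwT : w ∈ T := hWT hw
        have hwC : w ∉ C := fun h => G.irrefl (hCT w h w hwT)
        have h1 : w ∈ insert w C := Finset.mem_insert_self _ _
        have h2 : CliqueOn G (insert w C) :=
          cliqueOn_insert (fun x hx => (hCT x hx w hwT).symm) hCclq
        have h3 : ∀ x ∈ insert w C, ∀ t ∈ Rst.filter (fun t => wf t = w), G.Adj x t := by
          intro x hx t ht
          have htR : t ∈ Rst := Finset.mem_of_mem_filter _ ht
          have htT : t ∈ T := Finset.mem_of_mem_filter _ htR
          rcases Finset.mem_insert.1 hx with rfl | hx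
          · have := (hwf t htR).2
            rwa [(Finset.mem_filter.1 ht).2] at this
          · exact hCT x hx t htT
        have h4 : n ≤ (insert w C).card + k + 1 := by
          rw [Finset.card_insert_of_notMem hwC]
          omega
        obtain ⟨Pw, hPw⟩ := ih (insert w C) w _ h1 h2 h3 h4
        exact ⟨Pw, fun _ => hPw⟩
      · exact ⟨∅, fun h => absurd h hw⟩
    choose Pf hPf using hchild
    set S0 : Set V := insert c (↑Z : Set V) with hS0def
    set P : Finset (Set V) := insert S0 (W.biUnion Pf) with hPdef
    -- region facts
    have hreg : ∀ w ∈ W, ∀ S ∈ Pf w, S ⊆ insert w (↑(Rst.filter (fun t => wf t = w)) : Set V) :=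
      fun w hw => (hPf w hw).2.2.1
    have hZW : ∀ z ∈ Z, z ∉ W := fun z hz => (Finset.mem_filter.1 hz).2.1
    have hZR : ∀ z ∈ Z, z ∉ Rst := by
      intro z hz hzR
      obtain ⟨w, hw, hadj⟩ := (Finset.mem_filter.1 hzR).2.2
      exact (Finset.mem_filter.1 hz).2.2 w hw hadj
    have hcW : c ∉ W := fun h => hcT (hWT h)
    have hcR : c ∉ Rst := fun h => hcT (Finset.mem_of_mem_filter _ h)
    have hRW : ∀ t ∈ Rst, t ∉ W := fun t ht => (Finset.mem_filter.1 ht).2.1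
    -- membership in region of w implies in {w} ∪ Rst
    have hregmem : ∀ w ∈ W, ∀ S ∈ Pf w, ∀ v ∈ S, v = w ∨ (v ∈ Rst ∧ wf v = w) := by
      intro w hw S hS v hv
      have := hreg w hw S hS hv
      rcases Set.mem_insert_iff.1 this with rfl | hv'
      · exact Or.inl rfl
      · have : v ∈ Rst.filter (fun t => wf t = w) := by exact_mod_cast hv'
        exact Or.inr ⟨Finset.mem_of_mem_filter _ this, (Finset.mem_filter.1 this).2⟩
    have hS0mem : ∀ v ∈ S0, v = c ∨ v ∈ Z := by
      intro v hv
      rcases Set.mem_insert_iff.1 hv with rfl | hv'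
      · exact Or.inl rfl
      · exact Or.inr (by exact_mod_cast hv')
    -- disjointness between S0 and regions
    have hdisj0 : ∀ w ∈ W, ∀ S ∈ Pf w, ∀ v ∈ S0, v ∉ S := by
      intro w hw S hS v hv0 hvS
      rcases hS0mem v hv0 with rfl | hvZ <;> rcases hregmem w hw S hS v hvS with h | ⟨hvR, _⟩
      · exact hcW (h ▸ hw)
      · exact hcR hvR
      · exact hZW v hvZ (h ▸ hw)
      · exact hZR v hvZ hvR
    refine ⟨P, ?_, ?_, ?_, ?_, ?_⟩
    · -- cardinality
      calc P.card ≤ (W.biUnion Pf).card + 1 := Finset.card_insert_le _ _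
        _ ≤ (∑ w ∈ W, (Pf w).card) + 1 := by
            have := Finset.card_biUnion_le (s := W) (t := Pf); omega
        _ ≤ (∑ _w ∈ W, gfun n k) + 1 := by
            have : ∀ w ∈ W, (Pf w).card ≤ gfun n k := fun w hw => (hPf w hw).1
            have := Finset.sum_le_sum this; omega
        _ = W.card * gfun n k + 1 := by rw [Finset.sum_const, smul_eq_mul]
        _ ≤ 2*(n-1) * gfun n k + 1 := by
            have := Nat.mul_le_mul_right (gfun n k) hWcard; omega
        _ ≤ gfun n (k+1) := by
            simp only [gfun]
            have h1 : 2*(n-1) ≤ 2*n := by omega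
            have := Nat.mul_le_mul_right (gfun n k) h1
            omega
    · -- predicate
      intro S hS
      rcases Finset.mem_insert.1 hS with rfl | hS
      · rcases Finset.eq_empty_or_nonempty Z with hZe | hZne
        · right
          refine ⟨c, ?_⟩
          rw [hS0def, hZe]
          simp
        · left
          refine star_set hZne (fun h => hcT (Finset.mem_of_mem_filter _ h)) ?_ ?_
          · exact fun z hz => hTadj z (Finset.mem_of_mem_filter _ hz)
          · intro z hz z' hz' hne
            have h1 := Finset.mem_filter.1 hz
            have h2 := Finset.mem_filter.1 hz'
            exact hWfree z h1.1 z' h2.1 h1.2.1 h2.2.1 h1.2.2 h2.2.2 hne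
      · obtain ⟨w, hw, hSw⟩ := Finset.mem_biUnion.1 hS
        exact (hPf w hw).2.1 S hSw
    · -- subset
      intro S hS v hv
      rcases Finset.mem_insert.1 hS with rfl | hS
      · rcases hS0mem v hv with rfl | hvZ
        · exact Set.mem_insert _ _
        · exact Set.mem_insert_of_mem _ (by exact_mod_cast Finset.mem_of_mem_filter _ hvZ)
      · obtain ⟨w, hw, hSw⟩ := Finset.mem_biUnion.1 hS
        rcases hregmem w hw S hSw v hv with rfl | ⟨hvR, _⟩
        · exact Set.mem_insert_of_mem _ (by exact_mod_cast hWT hw)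
        · exact Set.mem_insert_of_mem _
            (by exact_mod_cast Finset.mem_of_mem_filter _ hvR)
    · -- coverage
      intro v hv
      rcases Set.mem_insert_iff.1 hv with rfl | hv
      · exact ⟨S0, Finset.mem_insert_self _ _, Set.mem_insert _ _⟩
      · have hvT : v ∈ T := by exact_mod_cast hv
        rcases hsplit v hvT with hvW | hvZ | hvR
        · obtain ⟨S, hS, hvS⟩ := (hPf v hvW).2.2.2.1 v (Set.mem_insert _ _)
          exact ⟨S, Finset.mem_insert_of_mem (Finset.mem_biUnion.2 ⟨v, hvW, hS⟩), hvS⟩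
        · exact ⟨S0, Finset.mem_insert_self _ _, Set.mem_insert_of_mem _ (by exact_mod_cast hvZ)⟩
        · have hwv := hwf v hvR
          obtain ⟨S, hS, hvS⟩ := (hPf (wf v) hwv.1).2.2.2.1 v
            (by
              have hvmem : v ∈ Rst.filter (fun t => wf t = wf v) :=
                Finset.mem_filter.2 ⟨hvR, rfl⟩
              exact Set.mem_insert_of_mem _ (by exact_mod_cast hvmem))
          exact ⟨S, Finset.mem_insert_of_mem (Finset.mem_biUnion.2 ⟨wf v, hwv.1, hS⟩), hvS⟩
    · -- disjointness
      intro S hS S' hS' hne v hvS hvS'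
      rcases Finset.mem_insert.1 hS with rfl | hS <;> rcases Finset.mem_insert.1 hS' with h' | hS'
      · exact hne h'.symm
      · obtain ⟨w, hw, hSw⟩ := Finset.mem_biUnion.1 hS'
        exact hdisj0 w hw S' hSw v hvS hvS'
      · obtain ⟨w, hw, hSw⟩ := Finset.mem_biUnion.1 hS
        exact hdisj0 w hw S hSw v (h' ▸ hvS') hvS
      · obtain ⟨w, hw, hSw⟩ := Finset.mem_biUnion.1 hS
        obtain ⟨w', hw', hSw'⟩ := Finset.mem_biUnion.1 hS'
        rcases eq_or_ne w w' with rfl | hww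
        · exact (hPf w hw).2.2.2.2 S hSw S' hSw' hne v hvS hvS'
        · rcases hregmem w hw S hSw v hvS with rfl | ⟨hvR, hvwf⟩ <;>
            rcases hregmem w' hw' S' hSw' v hvS' with h2 | ⟨hvR', hvwf'⟩
          · exact hww h2
          · exact hRW v hvR' hw
          · exact hRW v hvR (h2 ▸ hw')
          · exact hww (by rw [← hvwf, ← hvwf'])
end SPAux

theorem statement_3 (n l₀ : ℕ) (hn : 3 ≤ n) (hl : 1 ≤ l₀) :
    ∃ c : ℕ, ∀ (V : Type) [Fintype V] (H : SimpleGraph V),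
      H.Connected →
      ¬ HasInducedCopy H (completeGraph (Fin n)) →
      ¬ HasInducedCopy H (SStar n) →
      ¬ HasInducedCopy H (STilde n) →
      (∀ u v : V, H.dist u v ≤ l₀) →
      insp H ≤ c := by
  classical
  set K := SPAux.RR (n-1) (SPAux.RR n n) with hKdef
  refine ⟨(1 + l₀ * K ^ l₀) * SPAux.gfun n (n-2), ?_⟩
  intro V _ H hconn hKn hSStar hSTilde hdiam
  haveI : DecidableEq V := Classical.decEq V
  have hK1 : 1 ≤ K := SPAux.RR_pos (by omega) (SPAux.RR_pos (by omega) (by omega))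
  have hclq : ∀ B : Finset V, SPAux.CliqueOn H B → B.card ≠ n :=
    fun B hB hc => hKn (SPAux.copy_complete hB hc)
  have hIM : ∀ (x : V) (T : Finset V), (∀ t ∈ T, H.Adj x t) → ¬ SPAux.HasIM H T n :=
    fun x T hT h => hSTilde (SPAux.copy_stilde hT h)
  obtain ⟨r⟩ := hconn.nonempty
  have hlayers := SPAux.layers hconn hn hclq hSStar r
  choose Df hDf1 hDf2 hDf3 using hlayers
  set Dtot := insert r ((Finset.range l₀).biUnion Df) with hDtot
  have hdom : ∀ v : V, v ∈ Dtot ∨ ∃ d ∈ Dtot, H.Adj d v := by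
    intro v
    rcases Nat.eq_zero_or_pos (H.dist r v) with h0 | hpos
    · left
      have hrv : r = v := (hconn.dist_eq_zero_iff).1 h0
      rw [← hrv]
      exact Finset.mem_insert_self _ _
    · obtain ⟨j, hj⟩ : ∃ j, H.dist r v = j + 1 := ⟨H.dist r v - 1, by omega⟩
      have hjl : j < l₀ := by have := hdiam r v; omega
      obtain ⟨d, hd, hadj⟩ := hDf3 j v hj
      exact Or.inr ⟨d, Finset.mem_insert_of_mem
        (Finset.mem_biUnion.2 ⟨j, Finset.mem_range.2 hjl, hd⟩), hadj⟩
  have hDcard : Dtot.card ≤ 1 + l₀ * K ^ l₀ := by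
    calc Dtot.card ≤ ((Finset.range l₀).biUnion Df).card + 1 := Finset.card_insert_le _ _
      _ ≤ (∑ i ∈ Finset.range l₀, (Df i).card) + 1 := by
          have := Finset.card_biUnion_le (s := Finset.range l₀) (t := Df); omega
      _ ≤ (∑ _i ∈ Finset.range l₀, K ^ l₀) + 1 := by
          refine Nat.add_le_add_right (Finset.sum_le_sum ?_) 1
          intro i hi
          have h1 : (Df i).card ≤ K ^ (i+1) := by rw [hKdef]; exact hDf2 i
          have h2 : K ^ (i+1) ≤ K ^ l₀ :=
            Nat.pow_le_pow_right hK1 (by have := Finset.mem_range.1 hi; omega)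
          omega
      _ = l₀ * K ^ l₀ + 1 := by rw [Finset.sum_const, Finset.card_range, smul_eq_mul]
      _ = 1 + l₀ * K ^ l₀ := by omega
  have hwex : ∀ v : V, ∃ d, v ∉ Dtot → (d ∈ Dtot ∧ H.Adj d v) := by
    intro v
    rcases hdom v with h | ⟨d, hd, hadj⟩
    · exact ⟨v, fun hv => absurd h hv⟩
    · exact ⟨d, fun _ => ⟨hd, hadj⟩⟩
  choose df hdf using hwex
  set Tf : V → Finset V := fun d => Finset.univ.filter (fun v => v ∉ Dtot ∧ df v = d) with hTf
  have hchild : ∀ d : V, ∃ Pd : Finset (Set V), d ∈ Dtot →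
      (Pd.card ≤ SPAux.gfun n (n-2) ∧
       (∀ S ∈ Pd, IsInducedStarSet H S ∨ IsSingletonSet S) ∧
       (∀ S ∈ Pd, S ⊆ insert d (↑(Tf d) : Set V)) ∧
       (∀ v ∈ insert d (↑(Tf d) : Set V), ∃ S ∈ Pd, v ∈ S) ∧
       (∀ S ∈ Pd, ∀ S' ∈ Pd, S ≠ S' → ∀ v ∈ S, v ∉ S')) := by
    intro d
    by_cases hd : d ∈ Dtot
    · have h1 : d ∈ ({d} : Finset V) := Finset.mem_singleton_self _
      have h2 : SPAux.CliqueOn H {d} := by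
        intro x hx y hy hxy
        rw [Finset.mem_singleton] at hx hy
        exact absurd (hx.trans hy.symm) hxy
      have h3 : ∀ x ∈ ({d} : Finset V), ∀ t ∈ Tf d, H.Adj x t := by
        intro x hx t ht
        rw [Finset.mem_singleton] at hx
        subst hx
        have hm := Finset.mem_filter.1 ht
        have := (hdf t hm.2.1).2
        rwa [hm.2.2] at this
      have h4 : n ≤ ({d} : Finset V).card + (n-2) + 1 := by
        rw [Finset.card_singleton]; omega
      obtain ⟨Pd, hPd⟩ := SPAux.cover hclq hIM hn (n-2) {d} d (Tf d) h1 h2 h3 h4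
      exact ⟨Pd, fun _ => hPd⟩
    · exact ⟨∅, fun h => absurd h hd⟩
  choose Pg hPg using hchild
  set P := Dtot.biUnion Pg with hPdef
  have hregmem : ∀ d ∈ Dtot, ∀ S ∈ Pg d, ∀ v ∈ S, v = d ∨ (v ∉ Dtot ∧ df v = d) := by
    intro d hd S hS v hv
    have := (hPg d hd).2.2.1 S hS hv
    rcases Set.mem_insert_iff.1 this with rfl | hv'
    · exact Or.inl rfl
    · have hvm : v ∈ Tf d := by exact_mod_cast hv'
      have := Finset.mem_filter.1 hvm
      exact Or.inr ⟨this.2.1, this.2.2⟩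
  have hpart : IsPartitionBy P (fun S => IsInducedStarSet H S ∨ IsSingletonSet S) := by
    refine ⟨⟨?_, ?_⟩, ?_⟩
    · intro S hS
      obtain ⟨d, hd, hSd⟩ := Finset.mem_biUnion.1 hS
      exact (hPg d hd).2.1 S hSd
    · intro v
      by_cases hv : v ∈ Dtot
      · obtain ⟨S, hS, hvS⟩ := (hPg v hv).2.2.2.1 v (Set.mem_insert _ _)
        exact ⟨S, Finset.mem_biUnion.2 ⟨v, hv, hS⟩, hvS⟩
      · have h1 := hdf v hv
        have hvmem : v ∈ Tf (df v) := Finset.mem_filter.2 ⟨Finset.mem_univ _, hv, rfl⟩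
        obtain ⟨S, hS, hvS⟩ := (hPg (df v) h1.1).2.2.2.1 v
          (Set.mem_insert_of_mem _ (by exact_mod_cast hvmem))
        exact ⟨S, Finset.mem_biUnion.2 ⟨df v, h1.1, hS⟩, hvS⟩
    · intro S hS S' hS' hne v hvS hvS'
      obtain ⟨d, hd, hSd⟩ := Finset.mem_biUnion.1 hS
      obtain ⟨d', hd', hSd'⟩ := Finset.mem_biUnion.1 hS'
      rcases eq_or_ne d d' with rfl | hdd
      · exact (hPg d hd).2.2.2.2 S hSd S' hSd' hne v hvS hvS'
      · rcases hregmem d hd S hSd v hvS with rfl | ⟨hvD, hvdf⟩ <;>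
          rcases hregmem d' hd' S' hSd' v hvS' with h2 | ⟨hvD', hvdf'⟩
        · exact hdd h2
        · exact hvD' hd
        · exact hvD (h2 ▸ hd')
        · exact hdd (by rw [← hvdf, ← hvdf'])
  have hcardP : P.card ≤ (1 + l₀ * K ^ l₀) * SPAux.gfun n (n-2) := by
    calc P.card ≤ ∑ d ∈ Dtot, (Pg d).card := Finset.card_biUnion_le
      _ ≤ ∑ _d ∈ Dtot, SPAux.gfun n (n-2) :=
          Finset.sum_le_sum (fun d hd => (hPg d hd).1)
      _ = Dtot.card * SPAux.gfun n (n-2) := by rw [Finset.sum_const, smul_eq_mul]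
      _ ≤ (1 + l₀ * K ^ l₀) * SPAux.gfun n (n-2) :=
          Nat.mul_le_mul_right _ hDcard
  have hle : insp H ≤ P.card := Nat.sInf_le ⟨P, rfl, hpart⟩
  exact le_trans hle hcardP
end

section
/- Let n ≥ 3 be an integer, let G be a finite simple graph that is {K_n, S̃_n}-free, let x be a vertex of G, and let X be a subset of the neighborhood N_G(x). Then insp(G[{x} ∪ X]) ≤ ξ_{n,n-2}, where G[·] denotes the induced subgraph. -/
open SimpleGraph

section Aux

open Finset

def PairAdj {V : Type*} (G : SimpleGraph V) (s : Finset V) : Prop :=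
  ∀ u ∈ s, ∀ w ∈ s, u ≠ w → G.Adj u w

def PairNon {V : Type*} (G : SimpleGraph V) (s : Finset V) : Prop :=
  ∀ u ∈ s, ∀ w ∈ s, u ≠ w → ¬ G.Adj u w

def ramB : ℕ → ℕ → ℕ
  | 0, _ => 0
  | _+1, 0 => 0
  | a+1, b+1 => ramB a (b+1) + ramB (a+1) b + 1

lemma image_val_pairAdj {V : Type} [DecidableEq V] (G : SimpleGraph V) {s0 : Finset V}
    {s : Finset ↥s0} (hs : PairAdj (G.comap (Subtype.val : ↥s0 → V)) s) :
    PairAdj G (s.image Subtype.val) := by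
  intro u hu w hw huw
  simp only [Finset.mem_image] at hu hw
  obtain ⟨p, hp, rfl⟩ := hu
  obtain ⟨q, hq, rfl⟩ := hw
  exact hs p hp q hq (fun hpq => huw (by rw [hpq]))

lemma image_val_pairNon {V : Type} [DecidableEq V] (G : SimpleGraph V) {s0 : Finset V}
    {s : Finset ↥s0} (hs : PairNon (G.comap (Subtype.val : ↥s0 → V)) s) :
    PairNon G (s.image Subtype.val) := by
  intro u hu w hw huw
  simp only [Finset.mem_image] at hu hw
  obtain ⟨p, hp, rfl⟩ := hu
  obtain ⟨q, hq, rfl⟩ := hw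
  exact hs p hp q hq (fun hpq => huw (by rw [hpq]))

lemma ramB_spec : ∀ (a b : ℕ) (V : Type) [Fintype V] (G : SimpleGraph V),
    ramB a b ≤ Fintype.card V →
    (∃ s : Finset V, s.card = a ∧ PairAdj G s) ∨
    (∃ s : Finset V, s.card = b ∧ PairNon G s) := by
  intro a
  induction a with
  | zero =>
    intro b V _ G _
    exact Or.inl ⟨∅, by simp, by simp [PairAdj]⟩
  | succ a iha =>
    intro b
    induction b with
    | zero =>
      intro V _ G _
      exact Or.inr ⟨∅, by simp, by simp [PairNon]⟩
    | succ b ihb =>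
      intro V _ G h
      classical
      have hspec : ramB (a+1) (b+1) = ramB a (b+1) + ramB (a+1) b + 1 := by
        simp [ramB]
      have hpos : 0 < Fintype.card V := by omega
      obtain ⟨v⟩ := Fintype.card_pos_iff.mp hpos
      have hvmem : v ∈ univ.filter (fun u => ¬ G.Adj v u) := by
        simp [G.irrefl]
      have h1 := Finset.card_filter_add_card_filter_not
        (s := (univ : Finset V)) (p := fun u => G.Adj v u)
      simp only [Finset.card_univ] at h1
      have h2 : ((univ.filter (fun u => ¬ G.Adj v u)).erase v).card
          = (univ.filter (fun u => ¬ G.Adj v u)).card - 1 :=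
        Finset.card_erase_of_mem hvmem
      have h3 : 0 < (univ.filter (fun u => ¬ G.Adj v u)).card :=
        Finset.card_pos.mpr ⟨v, hvmem⟩
      have hcase : ramB a (b+1) ≤ (univ.filter (fun u => G.Adj v u)).card ∨
          ramB (a+1) b ≤ ((univ.filter (fun u => ¬ G.Adj v u)).erase v).card := by
        omega
      rcases hcase with hc | hc
      · set N : Finset V := univ.filter (fun u => G.Adj v u) with hN
        have hmemN : ∀ u ∈ N, G.Adj v u := by
          intro u hu; rw [hN] at hu; simpa using (Finset.mem_filter.mp hu).2
        have := iha (b+1) (↥N) (G.comap (Subtype.val : ↥N → V))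
          (by rwa [Fintype.card_coe])
        rcases this with ⟨s, hsc, hs⟩ | ⟨s, hsc, hs⟩
        · refine Or.inl ⟨insert v (s.image Subtype.val), ?_, ?_⟩
          · have hv : v ∉ s.image Subtype.val := by
              intro hmem
              obtain ⟨p, hp, hpv⟩ := Finset.mem_image.mp hmem
              exact G.irrefl (hpv ▸ hmemN _ p.2)
            rw [Finset.card_insert_of_notMem hv,
              Finset.card_image_of_injective _ Subtype.val_injective, hsc]
          · have hs' := image_val_pairAdj G hs
            intro u hu w hw huw
            rcases Finset.mem_insert.mp hu with rfl | hu' <;>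
              rcases Finset.mem_insert.mp hw with h' | hw'
            · exact absurd h'.symm huw
            · obtain ⟨q, hq, rfl⟩ := Finset.mem_image.mp hw'
              exact hmemN _ q.2
            · subst h'
              obtain ⟨q, hq, rfl⟩ := Finset.mem_image.mp hu'
              exact (hmemN _ q.2).symm
            · exact hs' u hu' w hw' huw
        · exact Or.inr ⟨s.image Subtype.val, by
            rw [Finset.card_image_of_injective _ Subtype.val_injective, hsc],
            image_val_pairNon G hs⟩
      · set M : Finset V := (univ.filter (fun u => ¬ G.Adj v u)).erase v with hM
        have hmemM : ∀ u ∈ M, ¬ G.Adj v u := by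
          intro u hu; rw [hM] at hu
          simpa using (Finset.mem_filter.mp (Finset.mem_of_mem_erase hu)).2
        have hvM : v ∉ M := by rw [hM]; exact Finset.notMem_erase _ _
        have := ihb (↥M) (G.comap (Subtype.val : ↥M → V))
          (by rwa [Fintype.card_coe])
        rcases this with ⟨s, hsc, hs⟩ | ⟨s, hsc, hs⟩
        · exact Or.inl ⟨s.image Subtype.val, by
            rw [Finset.card_image_of_injective _ Subtype.val_injective, hsc],
            image_val_pairAdj G hs⟩
        · refine Or.inr ⟨insert v (s.image Subtype.val), ?_, ?_⟩
          · have hv : v ∉ s.image Subtype.val := by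
              intro hmem
              obtain ⟨p, hp, hpv⟩ := Finset.mem_image.mp hmem
              exact hvM (hpv ▸ p.2)
            rw [Finset.card_insert_of_notMem hv,
              Finset.card_image_of_injective _ Subtype.val_injective, hsc]
          · have hs' := image_val_pairNon G hs
            intro u hu w hw huw
            rcases Finset.mem_insert.mp hu with rfl | hu' <;>
              rcases Finset.mem_insert.mp hw with h' | hw'
            · exact absurd h'.symm huw
            · obtain ⟨q, hq, rfl⟩ := Finset.mem_image.mp hw'
              exact hmemM _ q.2
            · subst h'
              obtain ⟨q, hq, rfl⟩ := Finset.mem_image.mp hu'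
              exact fun hadj => hmemM _ q.2 hadj.symm
            · exact hs' u hu' w hw' huw

lemma ramsey_mem (a b : ℕ) : ∀ (m : ℕ) (G : SimpleGraph (Fin m)), ramseyNumber a b ≤ m →
    (∃ s : Finset (Fin m), s.card = a ∧ PairAdj G s) ∨
    (∃ s : Finset (Fin m), s.card = b ∧ PairNon G s) :=
  Nat.sInf_mem (⟨ramB a b, fun m G hm =>
    ramB_spec a b (Fin m) G (by simpa using hm)⟩ :
    {R : ℕ | ∀ (m : ℕ) (G : SimpleGraph (Fin m)), R ≤ m →
      (∃ s : Finset (Fin m), s.card = a ∧ PairAdj G s) ∨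
      (∃ s : Finset (Fin m), s.card = b ∧ PairNon G s)}.Nonempty)

lemma ramsey_finset {V : Type} (G : SimpleGraph V) (a b : ℕ) (Z : Finset V)
    (h : ramseyNumber a b ≤ Z.card) :
    (∃ s : Finset V, ↑s ⊆ (↑Z : Set V) ∧ s.card = a ∧ PairAdj G s) ∨
    (∃ s : Finset V, ↑s ⊆ (↑Z : Set V) ∧ s.card = b ∧ PairNon G s) := by
  classical
  set e := (Fintype.equivFinOfCardEq (Fintype.card_coe Z)).symm with he
  set f : Fin Z.card → V := fun i => ↑(e i) with hf
  have hfinj : Function.Injective f := by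
    intro i j hij
    exact e.injective (Subtype.val_injective hij)
  have hfmem : ∀ i, f i ∈ Z := fun i => (e i).2
  rcases ramsey_mem a b Z.card (G.comap f) h with ⟨s, hsc, hs⟩ | ⟨s, hsc, hs⟩
  · refine Or.inl ⟨s.image f, ?_, ?_, ?_⟩
    · intro u hu
      obtain ⟨i, hi, rfl⟩ := Finset.mem_image.mp hu
      exact hfmem i
    · rw [Finset.card_image_of_injective _ hfinj, hsc]
    · intro u hu w hw huw
      obtain ⟨i, hi, rfl⟩ := Finset.mem_image.mp hu
      obtain ⟨j, hj, rfl⟩ := Finset.mem_image.mp hw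
      exact hs i hi j hj (fun hij => huw (by rw [hij]))
  · refine Or.inr ⟨s.image f, ?_, ?_, ?_⟩
    · intro u hu
      obtain ⟨i, hi, rfl⟩ := Finset.mem_image.mp hu
      exact hfmem i
    · rw [Finset.card_image_of_injective _ hfinj, hsc]
    · intro u hu w hw huw
      obtain ⟨i, hi, rfl⟩ := Finset.mem_image.mp hu
      obtain ⟨j, hj, rfl⟩ := Finset.mem_image.mp hw
      exact hs i hi j hj (fun hij => huw (by rw [hij]))

lemma ramsey_ge_three {n : ℕ} (hn : 3 ≤ n) : 3 ≤ ramseyNumber (n - 1) n := by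
  by_contra hlt
  push_neg at hlt
  rcases ramsey_mem (n - 1) n 2 ⊥ (by omega) with ⟨s, hsc, hs⟩ | ⟨s, hsc, hs⟩
  · have h2 : 1 < s.card := by omega
    obtain ⟨u, hu, w, hw, huw⟩ := Finset.one_lt_card.mp h2
    exact hs u hu w hw huw
  · have := Finset.card_le_univ s
    simp only [Finset.card_univ, Fintype.card_fin] at this
    omega

def geomS (t i : ℕ) : ℕ := ∑ k ∈ Finset.range i, t ^ k

lemma geomS_succ (t i : ℕ) : geomS t (i + 1) = t * geomS t i + 1 := by
  simpa [geomS] using geom_sum_succ (x := t) (n := i)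

lemma one_le_geomS (t : ℕ) {i : ℕ} (hi : 1 ≤ i) : 1 ≤ geomS t i := by
  obtain ⟨j, rfl⟩ := Nat.exists_eq_add_of_le hi
  rw [add_comm, geomS_succ]
  omega

lemma geomS_mul (t' i : ℕ) : t' * geomS (t' + 1) i + 1 = (t' + 1) ^ i := by
  induction i with
  | zero => simp [geomS]
  | succ i ih =>
    have : geomS (t' + 1) (i + 1) = (t' + 1) * geomS (t' + 1) i + 1 := geomS_succ _ _
    rw [this]
    calc t' * ((t' + 1) * geomS (t' + 1) i + 1) + 1
        = (t' + 1) * (t' * geomS (t' + 1) i + 1) := by ring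
      _ = (t' + 1) * (t' + 1) ^ i := by rw [ih]
      _ = (t' + 1) ^ (i + 1) := by ring

lemma xi_eq {n : ℕ} (hn : 3 ≤ n) :
    xi n (n - 2) = geomS (ramseyNumber (n - 1) n - 1) (n - 2) := by
  have hR3 := ramsey_ge_three hn
  set R := ramseyNumber (n - 1) n with hR
  set t' := R - 2 with ht'
  have h1 : R - 1 = t' + 1 := by omega
  have h2 := geomS_mul t' (n - 2)
  have h3 : (t' + 1) ^ (n - 2) - 1 = t' * geomS (t' + 1) (n - 2) := by omega
  show ((R - 1) ^ (n - 2) - 1) / (R - 2) = _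
  rw [h1, h3, ← ht', Nat.mul_div_cancel_left _ (by omega : 0 < t')]

lemma clique_to_copy {V : Type} (G : SimpleGraph V) {n : ℕ} (s : Finset V)
    (hc : s.card = n) (h : PairAdj G s) : HasInducedCopy G (completeGraph (Fin n)) := by
  have hcard : Fintype.card ↥s = n := by rw [Fintype.card_coe, hc]
  set e := (Fintype.equivFinOfCardEq hcard).symm with he
  refine ⟨⟨fun i => ↑(e i), fun i j hij => e.injective (Subtype.val_injective hij)⟩, ?_⟩
  intro a b
  constructor
  · intro hadj
    intro hab
    exact G.irrefl (hab ▸ hadj)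
  · intro hab
    have hab' : a ≠ b := hab
    exact h _ (e a).2 _ (e b).2
      (fun hv => hab' (e.injective (Subtype.val_injective hv)))

def GoodPiece {V : Type*} [DecidableEq V] (G : SimpleGraph V) (S : Finset V) : Prop :=
  ∃ c L, S = insert c L ∧ (∀ a ∈ L, G.Adj c a) ∧ PairNon G L

lemma key {V : Type} [Fintype V] [DecidableEq V] {n : ℕ} (hn : 3 ≤ n) (G : SimpleGraph V)
    (hK : ¬ HasInducedCopy G (completeGraph (Fin n)))
    (hS : ¬ HasInducedCopy G (STilde n)) :
    ∀ (j : ℕ) (v : V) (Y : Finset V), Y.Nonempty → (↑Y : Set V) ⊆ G.neighborSet v →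
    (¬ ∃ s : Finset V, s ⊆ Y ∧ s.card = j ∧ PairAdj G s) →
    ∃ 𝒮 : Finset (Finset V),
      𝒮.card ≤ geomS (ramseyNumber (n - 1) n - 1) (j - 1) ∧
      (∀ S ∈ 𝒮, GoodPiece G S) ∧
      (∀ S ∈ 𝒮, S ⊆ insert v Y) ∧
      (∀ w ∈ insert v Y, ∃ S ∈ 𝒮, w ∈ S) ∧
      (∀ S ∈ 𝒮, ∀ T ∈ 𝒮, S ≠ T → ∀ w ∈ S, w ∉ T) := by
  intro j
  induction j with
  | zero =>
    intro v Y hne hnb hcf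
    exact absurd ⟨∅, by simp, by simp, by simp [PairAdj]⟩ hcf
  | succ j ih =>
    intro v Y hne hnb hcf
    classical
    rcases Nat.eq_zero_or_pos j with rfl | hj
    · refine absurd ⟨{hne.choose}, ?_, by simp, ?_⟩ hcf
      · simpa using hne.choose_spec
      · intro u hu w hw huw
        simp only [Finset.mem_singleton] at hu hw
        exact absurd (hu.trans hw.symm) huw
    set R := ramseyNumber (n - 1) n with hRdef
    have hR3 : 3 ≤ R := ramsey_ge_three hn
    have hadjY : ∀ w ∈ Y, G.Adj v w := fun w hw => hnb hw
    have hvY : v ∉ Y := fun hv => G.irrefl (hadjY v hv)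
    -- maximal independent set
    set 𝒜 := Y.powerset.filter (fun s => PairNon G s) with h𝒜
    have h𝒜ne : 𝒜.Nonempty := ⟨∅, Finset.mem_filter.mpr ⟨Finset.empty_mem_powerset _, by simp [PairNon]⟩⟩
    obtain ⟨I, hI𝒜, hImax⟩ := Finset.exists_max_image 𝒜 Finset.card h𝒜ne
    have hIY : I ⊆ Y := Finset.mem_powerset.mp (Finset.mem_filter.mp hI𝒜).1
    have hInon : PairNon G I := (Finset.mem_filter.mp hI𝒜).2
    have hdom : ∀ w ∈ Y, w ∉ I → ∃ u ∈ I, G.Adj u w := by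
      intro w hw hwI
      by_contra hno
      push_neg at hno
      have hmem : insert w I ∈ 𝒜 := by
        refine Finset.mem_filter.mpr ⟨Finset.mem_powerset.mpr (Finset.insert_subset hw hIY), ?_⟩
        intro a ha b hb hab
        rcases Finset.mem_insert.mp ha with rfl | ha' <;>
          rcases Finset.mem_insert.mp hb with h' | hb'
        · exact absurd h'.symm hab
        · exact fun hadj => hno b hb' hadj.symm
        · subst h'; exact fun hadj => hno a ha' hadj
        · exact hInon a ha' b hb' hab
      have := hImax _ hmem
      rw [Finset.card_insert_of_notMem hwI] at this
      omega
    -- minimal dominating subset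
    set 𝒟 := I.powerset.filter (fun s => ∀ w ∈ Y, w ∉ I → ∃ u ∈ s, G.Adj u w) with h𝒟
    have h𝒟ne : 𝒟.Nonempty := ⟨I, by
      refine Finset.mem_filter.mpr ⟨Finset.mem_powerset.mpr (Finset.Subset.refl I), hdom⟩⟩
    obtain ⟨I', hI'𝒟, hI'min⟩ := Finset.exists_min_image 𝒟 Finset.card h𝒟ne
    have hI'I : I' ⊆ I := Finset.mem_powerset.mp (Finset.mem_filter.mp hI'𝒟).1
    have hI'dom : ∀ w ∈ Y, w ∉ I → ∃ u ∈ I', G.Adj u w := (Finset.mem_filter.mp hI'𝒟).2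
    have hpriv : ∀ u ∈ I', ∃ z, z ∈ Y ∧ z ∉ I ∧ G.Adj u z ∧
        ∀ u' ∈ I', u' ≠ u → ¬ G.Adj u' z := by
      intro u hu
      by_contra hno
      push_neg at hno
      have herase : I'.erase u ∈ 𝒟 := by
        refine Finset.mem_filter.mpr
          ⟨Finset.mem_powerset.mpr ((Finset.erase_subset u I').trans hI'I), ?_⟩
        intro w hw hwI
        obtain ⟨u0, hu0, hadj⟩ := hI'dom w hw hwI
        by_cases h0 : u0 = u
        · subst h0
          obtain ⟨u', hu', hne', hadj'⟩ := hno w hw hwI hadj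
          exact ⟨u', Finset.mem_erase.mpr ⟨hne', hu'⟩, hadj'⟩
        · exact ⟨u0, Finset.mem_erase.mpr ⟨h0, hu0⟩, hadj⟩
      have h1 := hI'min _ herase
      have h2 : (I'.erase u).card = I'.card - 1 := Finset.card_erase_of_mem hu
      have h3 : 0 < I'.card := Finset.card_pos.mpr ⟨u, hu⟩
      omega
    -- nondependent private vertex function
    have hpriv' : ∃ zc : V → V, ∀ u ∈ I', zc u ∈ Y ∧ zc u ∉ I ∧ G.Adj u (zc u) ∧
        ∀ u' ∈ I', u' ≠ u → ¬ G.Adj u' (zc u) := by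
      choose zf e1 e2 e3 e4 using hpriv
      refine ⟨fun u => if hu : u ∈ I' then zf u hu else v, ?_⟩
      intro u hu
      simp only [dif_pos hu]
      exact ⟨e1 u hu, e2 u hu, e3 u hu, e4 u hu⟩
    obtain ⟨zc, hzc⟩ := hpriv'
    -- bound on |I'|
    have hI'card : I'.card ≤ R - 1 := by
      by_contra hbig
      push_neg at hbig
      set Z := I'.image zc with hZ
      have hZcard : Z.card = I'.card := by
        rw [hZ]
        apply Finset.card_image_of_injOn
        intro u hu u' hu' hzz
        by_contra hne'
        exact (hzc u' hu').2.2.2 u hu hne' (hzz ▸ (hzc u hu).2.2.1)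
      have hZY : ∀ z ∈ Z, z ∈ Y := by
        intro z hz
        obtain ⟨u, hu, rfl⟩ := Finset.mem_image.mp hz
        exact (hzc u hu).1
      have hZnI : ∀ z ∈ Z, z ∉ I := by
        intro z hz
        obtain ⟨u, hu, rfl⟩ := Finset.mem_image.mp hz
        exact (hzc u hu).2.1
      rcases ramsey_finset G (n - 1) n Z (by omega) with ⟨s, hsZ, hsc, hs⟩ | ⟨s, hsZ, hsc, hs⟩
      · -- clique of size n-1 among Z ⊆ N(v): contradiction with K_n-freeness
        apply hK
        refine clique_to_copy G (insert v s) ?_ ?_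
        · have hvs : v ∉ s := fun hv => hvY (hZY v (hsZ hv))
          rw [Finset.card_insert_of_notMem hvs, hsc]
          omega
        · intro a ha b hb hab
          rcases Finset.mem_insert.mp ha with rfl | ha' <;>
            rcases Finset.mem_insert.mp hb with h' | hb'
          · exact absurd h'.symm hab
          · exact hadjY b (hZY b (hsZ hb'))
          · subst h'; exact (hadjY a (hZY a (hsZ ha'))).symm
          · exact hs a ha' b hb' hab
      · -- independent set of size n among the private vertices: S̃_n
        apply hS
        have hcard : Fintype.card ↥s = n := by rw [Fintype.card_coe, hsc]
        set e := (Fintype.equivFinOfCardEq hcard).symm with he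
        set zfun : Fin n → V := fun i => ↑(e i) with hzfun
        have hzinj : Function.Injective zfun := by
          intro i j hij
          exact e.injective (Subtype.val_injective hij)
        have hzs : ∀ i, zfun i ∈ s := fun i => (e i).2
        have hex : ∀ i : Fin n, ∃ u, u ∈ I' ∧ zc u = zfun i := by
          intro i
          have : zfun i ∈ Z := hsZ (hzs i)
          obtain ⟨u, hu, huz⟩ := Finset.mem_image.mp this
          exact ⟨u, hu, huz⟩
        choose ufun huf hzu using hex
        have huinj : Function.Injective ufun := by
          intro i j hij
          apply hzinj
          rw [← hzu i, ← hzu j, hij]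
        have huI : ∀ i, ufun i ∈ I := fun i => hI'I (huf i)
        have hzY' : ∀ i, zfun i ∈ Y := fun i => hZY _ (hsZ (hzs i))
        have hznI : ∀ i, zfun i ∉ I := fun i => hZnI _ (hsZ (hzs i))
        have hadjuz : ∀ i, G.Adj (ufun i) (zfun i) := by
          intro i
          have := (hzc (ufun i) (huf i)).2.2.1
          rwa [hzu i] at this
        have hpriv2 : ∀ i k, i ≠ k → ¬ G.Adj (ufun i) (zfun k) := by
          intro i k hik
          have := (hzc (ufun k) (huf k)).2.2.2 (ufun i) (huf i)
            (fun h => hik (huinj h))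
          rwa [hzu k] at this
        set F : Unit ⊕ Fin n ⊕ Fin n → V :=
          Sum.elim (fun _ => v) (Sum.elim ufun zfun) with hF
        have hFinj : Function.Injective F := by
          rintro (_ | i | i) (_ | k | k) hik <;>
            simp only [hF, Sum.elim_inl, Sum.elim_inr] at hik
          · rfl
          · exact absurd (hIY (huI k)) (hik ▸ hvY)
          · exact absurd (hzY' k) (hik ▸ hvY)
          · exact absurd (hIY (huI i)) (hik ▸ hvY).elim
          · rw [huinj hik]
          · exact absurd (huI i) (hik ▸ hznI k)
          · exact absurd (hzY' i) ((hik.symm ▸ hvY) : zfun i ∉ Y)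
          · exact absurd (huI k) ((hik ▸ hznI i) : ufun k ∉ I).elim
          · rw [hzinj hik]
        refine ⟨⟨F, hFinj⟩, ?_⟩
        rintro (_ | i | i) (_ | k | k) <;>
          simp only [Function.Embedding.coeFn_mk, hF, Sum.elim_inl, Sum.elim_inr, STilde,
            SimpleGraph.fromRel_adj]
        · simp [G.irrefl]
        · simp [hadjY _ (hIY (huI k))]
        · simp [hadjY _ (hzY' k)]
        · simp [(hadjY _ (hIY (huI i))).symm]
        · have hlhs : ¬ G.Adj (ufun i) (ufun k) := by
            by_cases hik : i = k
            · subst hik; exact G.irrefl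
            · exact hInon _ (huI i) _ (huI k) (fun h => hik (huinj h))
          simp [hlhs]
        · by_cases hik : i = k
          · subst hik; simp [hadjuz i]
          · simp [hpriv2 i k hik, hik, Ne.symm hik]
        · simp [(hadjY _ (hzY' i)).symm]
        · by_cases hik : i = k
          · subst hik; simp [(hadjuz i).symm]
          · have hlhs : ¬ G.Adj (zfun i) (ufun k) := fun h => hpriv2 k i (Ne.symm hik) h.symm
            simp [hlhs, hik, Ne.symm hik]
        · have hlhs : ¬ G.Adj (zfun i) (zfun k) := by
            by_cases hik : i = k
            · subst hik; exact G.irrefl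
            · exact hs _ (hzs i) _ (hzs k) (fun h => hik (hzinj h))
          simp [hlhs]
    -- fiber assignment
    set ch : V → V := fun w => if h : ∃ u ∈ I', G.Adj u w then h.choose else w with hch
    have hch_spec : ∀ w ∈ Y, w ∉ I → ch w ∈ I' ∧ G.Adj (ch w) w := by
      intro w hw hwI
      have hex : ∃ u ∈ I', G.Adj u w := hI'dom w hw hwI
      rw [hch]
      simp only [dif_pos hex]
      exact hex.choose_spec
    set Fib : V → Finset V := fun u => (Y \ I).filter (fun w => ch w = u) with hFib
    have hFibYI : ∀ u, Fib u ⊆ Y \ I := fun u => Finset.filter_subset _ _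
    have hFibY : ∀ u, Fib u ⊆ Y := fun u => (hFibYI u).trans Finset.sdiff_subset
    have hFib_adj : ∀ u ∈ I', ∀ w ∈ Fib u, G.Adj u w := by
      intro u hu w hw
      have hw' := Finset.mem_filter.mp hw
      have hmem := Finset.mem_sdiff.mp hw'.1
      have := (hch_spec w hmem.1 hmem.2).2
      rwa [hw'.2] at this
    have hFib_ne : ∀ u ∈ I', (Fib u).Nonempty := by
      intro u hu
      refine ⟨zc u, ?_⟩
      have h1 := hzc u hu
      refine Finset.mem_filter.mpr ⟨Finset.mem_sdiff.mpr ⟨h1.1, h1.2.1⟩, ?_⟩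
      have h2 := hch_spec (zc u) h1.1 h1.2.1
      by_contra hne'
      exact h1.2.2.2 (ch (zc u)) h2.1 hne' h2.2
    have hFib_nbr : ∀ u ∈ I', (↑(Fib u) : Set V) ⊆ G.neighborSet u := by
      intro u hu w hw
      exact hFib_adj u hu w hw
    have hFib_cf : ∀ u ∈ I', ¬ ∃ s : Finset V, s ⊆ Fib u ∧ s.card = j ∧ PairAdj G s := by
      rintro u hu ⟨s, hsF, hsc, hsadj⟩
      apply hcf
      have hus : u ∉ s := fun husmem => (Finset.mem_sdiff.mp (hFibYI u (hsF husmem))).2 (hI'I hu)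
      refine ⟨insert u s, ?_, ?_, ?_⟩
      · exact Finset.insert_subset (hIY (hI'I hu)) (hsF.trans (hFibY u))
      · rw [Finset.card_insert_of_notMem hus, hsc]
      · intro a ha b hb hab
        rcases Finset.mem_insert.mp ha with rfl | ha' <;>
          rcases Finset.mem_insert.mp hb with h' | hb'
        · exact absurd h'.symm hab
        · exact hFib_adj a hu b (hsF hb')
        · subst h'; exact (hFib_adj b hu a (hsF ha')).symm
        · exact hsadj a ha' b hb' hab
    have hrec' : ∃ Sf : V → Finset (Finset V), ∀ u ∈ I',
        (Sf u).card ≤ geomS (R - 1) (j - 1) ∧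
        (∀ S ∈ Sf u, GoodPiece G S) ∧
        (∀ S ∈ Sf u, S ⊆ insert u (Fib u)) ∧
        (∀ w ∈ insert u (Fib u), ∃ S ∈ Sf u, w ∈ S) ∧
        (∀ S ∈ Sf u, ∀ T ∈ Sf u, S ≠ T → ∀ w ∈ S, w ∉ T) := by
      have hrec : ∀ u ∈ I', ∃ 𝒮u : Finset (Finset V),
          𝒮u.card ≤ geomS (R - 1) (j - 1) ∧
          (∀ S ∈ 𝒮u, GoodPiece G S) ∧
          (∀ S ∈ 𝒮u, S ⊆ insert u (Fib u)) ∧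
          (∀ w ∈ insert u (Fib u), ∃ S ∈ 𝒮u, w ∈ S) ∧
          (∀ S ∈ 𝒮u, ∀ T ∈ 𝒮u, S ≠ T → ∀ w ∈ S, w ∉ T) :=
        fun u hu => ih u (Fib u) (hFib_ne u hu) (hFib_nbr u hu) (hFib_cf u hu)
      choose Sf0 hSf0 using hrec
      refine ⟨fun u => if hu : u ∈ I' then Sf0 u hu else ∅, ?_⟩
      intro u hu
      simp only [dif_pos hu]
      exact hSf0 u hu
    obtain ⟨Sf, hSf⟩ := hrec'
    set star1 : Finset V := insert v (I \ I') with hstar1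
    set 𝒮 : Finset (Finset V) := insert star1 (I'.biUnion Sf) with h𝒮
    have hblockY : ∀ u ∈ I', insert u (Fib u) ⊆ Y :=
      fun u hu => Finset.insert_subset (hIY (hI'I hu)) (hFibY u)
    refine ⟨𝒮, ?_, ?_, ?_, ?_, ?_⟩
    · -- cardinality
      have hc1 : 𝒮.card ≤ (I'.biUnion Sf).card + 1 := Finset.card_insert_le _ _
      have hc2 : (I'.biUnion Sf).card ≤ ∑ u ∈ I', (Sf u).card := Finset.card_biUnion_le
      have hc3 : ∑ u ∈ I', (Sf u).card ≤ I'.card * geomS (R - 1) (j - 1) := by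
        calc ∑ u ∈ I', (Sf u).card ≤ ∑ _u ∈ I', geomS (R - 1) (j - 1) :=
              Finset.sum_le_sum (fun u hu => (hSf u hu).1)
          _ = I'.card * geomS (R - 1) (j - 1) := by rw [Finset.sum_const, smul_eq_mul]
      have hc4 : I'.card * geomS (R - 1) (j - 1) ≤ (R - 1) * geomS (R - 1) (j - 1) :=
        Nat.mul_le_mul_right _ hI'card
      have hj1 : j - 1 + 1 = j := by omega
      have hc5 : geomS (R - 1) (j + 1 - 1) = (R - 1) * geomS (R - 1) (j - 1) + 1 := by
        have := geomS_succ (R - 1) (j - 1)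
        rw [hj1] at this
        simpa using this
      omega
    · -- good pieces
      intro S hS
      rcases Finset.mem_insert.mp hS with rfl | hS'
      · exact ⟨v, I \ I', rfl,
          fun a ha => hadjY a (hIY (Finset.sdiff_subset ha)),
          fun a ha b hb hab =>
            hInon a (Finset.sdiff_subset ha) b (Finset.sdiff_subset hb) hab⟩
      · obtain ⟨u, hu, hSu⟩ := Finset.mem_biUnion.mp hS'
        exact (hSf u hu).2.1 S hSu
    · -- subsets
      intro S hS
      rcases Finset.mem_insert.mp hS with rfl | hS'
      · exact Finset.insert_subset_insert v (Finset.sdiff_subset.trans hIY)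
      · obtain ⟨u, hu, hSu⟩ := Finset.mem_biUnion.mp hS'
        exact ((hSf u hu).2.2.1 S hSu).trans ((hblockY u hu).trans (Finset.subset_insert v Y))
    · -- cover
      intro w hw
      rcases Finset.mem_insert.mp hw with rfl | hwY
      · exact ⟨star1, Finset.mem_insert_self _ _, Finset.mem_insert_self _ _⟩
      · by_cases hwI : w ∈ I
        · by_cases hwI' : w ∈ I'
          · obtain ⟨S, hS, hwS⟩ := (hSf w hwI').2.2.2.1 w (Finset.mem_insert_self _ _)
            exact ⟨S, Finset.mem_insert_of_mem (Finset.mem_biUnion.mpr ⟨w, hwI', hS⟩), hwS⟩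
          · exact ⟨star1, Finset.mem_insert_self _ _,
              Finset.mem_insert_of_mem (Finset.mem_sdiff.mpr ⟨hwI, hwI'⟩)⟩
        · have hu := hch_spec w hwY hwI
          have hwF : w ∈ Fib (ch w) :=
            Finset.mem_filter.mpr ⟨Finset.mem_sdiff.mpr ⟨hwY, hwI⟩, rfl⟩
          obtain ⟨S, hS, hwS⟩ := (hSf (ch w) hu.1).2.2.2.1 w (Finset.mem_insert_of_mem hwF)
          exact ⟨S, Finset.mem_insert_of_mem (Finset.mem_biUnion.mpr ⟨ch w, hu.1, hS⟩), hwS⟩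
    · -- disjointness
      have hblockv : ∀ u ∈ I', v ∉ insert u (Fib u) :=
        fun u hu hv => hvY (hblockY u hu hv)
      have hblockdisj : ∀ u ∈ I', ∀ u' ∈ I', u ≠ u' →
          ∀ w ∈ insert u (Fib u), w ∉ insert u' (Fib u') := by
        intro u hu u' hu' huu' w hw hw'
        rcases Finset.mem_insert.mp hw with rfl | hwF <;>
          rcases Finset.mem_insert.mp hw' with h' | hwF'
        · exact huu' h'
        · exact (Finset.mem_sdiff.mp (hFibYI u' hwF')).2 (hI'I hu)
        · subst h'
          exact (Finset.mem_sdiff.mp (hFibYI u hwF)).2 (hI'I hu')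
        · have e1 := (Finset.mem_filter.mp hwF).2
          have e2 := (Finset.mem_filter.mp hwF').2
          exact huu' (e1 ▸ e2 ▸ rfl)
      have hstar1disj : ∀ u ∈ I', ∀ w ∈ star1, w ∉ insert u (Fib u) := by
        intro u hu w hw hw'
        rcases Finset.mem_insert.mp hw with rfl | hwI
        · exact hblockv u hu hw'
        · have hwmem := Finset.mem_sdiff.mp hwI
          rcases Finset.mem_insert.mp hw' with rfl | hwF
          · exact hwmem.2 hu
          · exact (Finset.mem_sdiff.mp (hFibYI u hwF)).2 hwmem.1
      intro S hS T hT hST w hwS hwT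
      rcases Finset.mem_insert.mp hS with rfl | hS' <;>
        rcases Finset.mem_insert.mp hT with h' | hT'
      · exact hST h'.symm
      · obtain ⟨u, hu, hTu⟩ := Finset.mem_biUnion.mp hT'
        exact hstar1disj u hu w hwS ((hSf u hu).2.2.1 T hTu hwT)
      · subst h'
        obtain ⟨u, hu, hSu⟩ := Finset.mem_biUnion.mp hS'
        exact hstar1disj u hu w hwT ((hSf u hu).2.2.1 S hSu hwS)
      · obtain ⟨u, hu, hSu⟩ := Finset.mem_biUnion.mp hS'
        obtain ⟨u', hu', hTu⟩ := Finset.mem_biUnion.mp hT'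
        by_cases huu' : u = u'
        · subst huu'
          exact (hSf u hu).2.2.2.2 S hSu T hTu hST w hwS hwT
        · exact hblockdisj u hu u' hu' huu' w ((hSf u hu).2.2.1 S hSu hwS)
            ((hSf u' hu').2.2.1 T hTu hwT)


lemma goodPiece_star {V : Type} [DecidableEq V] (G : SimpleGraph V) (T : Set V)
    (c : V) (L : Finset V) (hLne : L.Nonempty) (hcT : c ∈ T) (hLT : ∀ a ∈ L, a ∈ T)
    (hadj : ∀ a ∈ L, G.Adj c a) (hind : PairNon G L) :
    IsInducedStarSet (G.induce T) {p : ↥T | ↑p ∈ insert c L} := by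
  classical
  have hcL : c ∉ L := fun hc => G.irrefl (hadj c hc)
  refine ⟨L.card, Finset.card_pos.mpr hLne, ?_⟩
  set S' : Set ↥T := {p : ↥T | ↑p ∈ insert c L} with hS'
  set e0 := Fintype.equivFinOfCardEq (Fintype.card_coe L) with he0
  set φ : Unit ⊕ Fin L.card → ↥S' :=
    Sum.elim
      (fun _ => ⟨⟨c, hcT⟩, by simp [hS']⟩)
      (fun i => ⟨⟨(e0.symm i : V), hLT _ (e0.symm i).2⟩, by
        simp only [hS', Set.mem_setOf_eq]
        exact Finset.mem_insert_of_mem (e0.symm i).2⟩) with hφ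
  have hbij : Function.Bijective φ := by
    constructor
    · rintro (_ | i) (_ | k) hik <;>
        simp only [hφ, Sum.elim_inl, Sum.elim_inr, Subtype.mk.injEq] at hik
    -- cases
      · rfl
      · exact absurd (show c ∈ L by rw [hik]; exact (e0.symm k).2) hcL
      · exact absurd (show c ∈ L by rw [← hik]; exact (e0.symm i).2) hcL
      · have : e0.symm i = e0.symm k := Subtype.ext (by
          simpa using hik)
        rw [e0.symm.injective this]
    · rintro ⟨⟨p, hpT⟩, hpS⟩
      have hp : p ∈ insert c L := hpS
      rcases Finset.mem_insert.mp hp with rfl | hpL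
      · exact ⟨Sum.inl (), by simp [hφ]⟩
      · refine ⟨Sum.inr (e0 ⟨p, hpL⟩), ?_⟩
        simp only [hφ, Sum.elim_inr]
        apply Subtype.ext
        apply Subtype.ext
        simp
  have hiso : _root_.starGraph L.card ≃g (G.induce T).induce S' := by
    refine ⟨Equiv.ofBijective φ hbij, ?_⟩
    rintro (_ | i) (_ | k) <;>
      simp only [Equiv.ofBijective_apply, hφ, Sum.elim_inl, Sum.elim_inr, comap_adj,
        Function.Embedding.coe_subtype, _root_.starGraph, completeBipartiteGraph_adj]
    · simp [G.irrefl]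
    · simp [hadj _ (e0.symm k).2]
    · simp [(hadj _ (e0.symm i).2).symm]
    · have hlhs : ¬ G.Adj ↑(e0.symm i) ↑(e0.symm k) := by
        by_cases hik : i = k
        · subst hik; exact G.irrefl
        · exact hind _ (e0.symm i).2 _ (e0.symm k).2
            (fun h => hik (e0.symm.injective (Subtype.ext h)))
      simp [hlhs]
  exact ⟨hiso.symm⟩

end Aux

theorem statement_4 (n : ℕ) (hn : 3 ≤ n) (V : Type) [Fintype V] (G : SimpleGraph V)
    (hK : ¬ HasInducedCopy G (completeGraph (Fin n)))
    (hS : ¬ HasInducedCopy G (STilde n))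
    (x : V) (X : Set V) (hX : X ⊆ G.neighborSet x) :
    insp (G.induce ({x} ∪ X)) ≤ xi n (n - 2) := by
  classical
  have hR3 : 3 ≤ ramseyNumber (n - 1) n := ramsey_ge_three hn
  have hxi : xi n (n - 2) = geomS (ramseyNumber (n - 1) n - 1) (n - 2) := xi_eq hn
  set T : Set V := {x} ∪ X with hT
  have hxT : x ∈ T := Set.mem_union_left _ rfl
  have hXT : ∀ w ∈ X, w ∈ T := fun w hw => Set.mem_union_right _ hw
  set Y : Finset V := Finset.univ.filter (fun w => w ∈ X) with hY
  have hYX : ∀ w, w ∈ Y ↔ w ∈ X := by intro w; simp [hY]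
  have hadjX : ∀ w ∈ Y, G.Adj x w := fun w hw => hX ((hYX w).mp hw)
  rw [hxi]
  rcases Finset.eq_empty_or_nonempty Y with hYe | hYne
  · -- X is empty
    have hXe : ∀ w, w ∉ X := fun w hw => by
      have := (hYX w).mpr hw
      rw [hYe] at this
      simp at this
    have hpart : IsPartitionBy {({⟨x, hxT⟩} : Set ↥T)}
        (fun S => IsInducedStarSet (G.induce T) S ∨ IsSingletonSet S) := by
      refine ⟨⟨?_, ?_⟩, ?_⟩
      · intro S hS
        rw [Finset.mem_singleton] at hS
        subst hS
        exact Or.inr ⟨⟨x, hxT⟩, rfl⟩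
      · intro p
        refine ⟨{⟨x, hxT⟩}, Finset.mem_singleton_self _, ?_⟩
        have hp : (↑p : V) ∈ ({x} : Set V) ∪ X := p.2
        rcases hp with hp | hp
        · exact Subtype.ext hp
        · exact absurd hp (hXe _)
      · intro S hS S' hS' hSS
        rw [Finset.mem_singleton] at hS hS'
        exact absurd (hS.trans hS'.symm) hSS
    have h1 : insp (G.induce T) ≤ 1 := by
      apply Nat.sInf_le
      exact ⟨{({⟨x, hxT⟩} : Set ↥T)}, Finset.card_singleton _, hpart⟩
    exact h1.trans (one_le_geomS _ (by omega))
  · have hcf : ¬ ∃ s : Finset V, s ⊆ Y ∧ s.card = n - 1 ∧ PairAdj G s := by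
      rintro ⟨s, hsY, hsc, hsadj⟩
      apply hK
      have hxs : x ∉ s := fun hxmem => G.irrefl (hadjX x (hsY hxmem))
      refine clique_to_copy G (insert x s) ?_ ?_
      · rw [Finset.card_insert_of_notMem hxs, hsc]; omega
      · intro a ha b hb hab
        rcases Finset.mem_insert.mp ha with rfl | ha' <;>
          rcases Finset.mem_insert.mp hb with h' | hb'
        · exact absurd h'.symm hab
        · exact hadjX b (hsY hb')
        · subst h'; exact (hadjX a (hsY ha')).symm
        · exact hsadj a ha' b hb' hab
    have hnb : (↑Y : Set V) ⊆ G.neighborSet x := fun w hw => hX ((hYX w).mp hw)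
    obtain ⟨𝒮, hcard, hgood, hsub, hcov, hdisj⟩ := key hn G hK hS (n - 1) x Y hYne hnb hcf
    have hmemT : ∀ w ∈ insert x Y, w ∈ T := by
      intro w hw
      rcases Finset.mem_insert.mp hw with rfl | hw'
      · exact hxT
      · exact hXT w ((hYX w).mp hw')
    set P : Finset (Set ↥T) := 𝒮.image (fun S => {p : ↥T | ↑p ∈ S}) with hP
    have hpart : IsPartitionBy P
        (fun S => IsInducedStarSet (G.induce T) S ∨ IsSingletonSet S) := by
      refine ⟨⟨?_, ?_⟩, ?_⟩
      · intro A hA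
        obtain ⟨S, hS𝒮, rfl⟩ := Finset.mem_image.mp hA
        obtain ⟨c, L, rfl, hadj, hind⟩ := hgood S hS𝒮
        have hcT : c ∈ T := hmemT c (hsub _ hS𝒮 (Finset.mem_insert_self c L))
        rcases Finset.eq_empty_or_nonempty L with rfl | hLne
        · refine Or.inr ⟨⟨c, hcT⟩, ?_⟩
          ext p
          simp only [Set.mem_setOf_eq, Set.mem_singleton_iff]
          constructor
          · intro hp
            apply Subtype.ext
            simpa using hp
          · intro hp
            subst hp
            simp
        · exact Or.inl (goodPiece_star G T c L hLne hcT
            (fun a ha => hmemT a (hsub _ hS𝒮 (Finset.mem_insert_of_mem ha))) hadj hind)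
      · intro p
        have hp : (↑p : V) ∈ insert x Y := by
          have hp2 : (↑p : V) ∈ ({x} : Set V) ∪ X := p.2
          rcases hp2 with hp2 | hp2
          · rw [hp2]; exact Finset.mem_insert_self _ _
          · exact Finset.mem_insert_of_mem ((hYX _).mpr hp2)
        obtain ⟨S, hSm, hmem⟩ := hcov _ hp
        refine ⟨{q : ↥T | (↑q : V) ∈ S}, Finset.mem_image_of_mem _ hSm, ?_⟩
        exact (show (↑p : V) ∈ S from hmem)
      · intro A hA B hB hAB p hpA hpB
        obtain ⟨S, hSm, rfl⟩ := Finset.mem_image.mp hA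
        obtain ⟨S', hSm', rfl⟩ := Finset.mem_image.mp hB
        by_cases hSS : S = S'
        · subst hSS; exact hAB rfl
        · exact hdisj S hSm S' hSm' hSS ↑p hpA hpB
    have h1 : insp (G.induce T) ≤ P.card := by
      apply Nat.sInf_le
      exact ⟨P, rfl, hpart⟩
    have h2 : P.card ≤ 𝒮.card := Finset.card_image_le
    have h3 : n - 1 - 1 = n - 2 := by omega
    rw [h3] at hcard
    omega
end

section
/- For every integer n ≥ 4 there exists a constant c(n), depending only on n, such that every connected {K_n, S*_n, P_n}-free finite simple graph G satisfies insc(G) ≤ c(n). -/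
open SimpleGraph

namespace SCAux


lemma pack_lt {a b A B : ℕ} (ha : a < A) (hb : b < B) : a + A * b < A * B := by
  have h1 : A * (b + 1) ≤ A * B := Nat.mul_le_mul_left _ hb
  have h2 : A * (b + 1) = A * b + A := by ring
  omega

lemma pack_inj {a a' b b' A : ℕ} (ha : a < A) (ha' : a' < A)
    (h : a + A * b = a' + A * b') : a = a' ∧ b = b' := by
  have h1 : (a + A * b) % A = a := by
    rw [Nat.add_mul_mod_self_left, Nat.mod_eq_of_lt ha]
  have h2 : (a' + A * b') % A = a' := by
    rw [Nat.add_mul_mod_self_left, Nat.mod_eq_of_lt ha']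
  have haa : a = a' := by rw [← h1, ← h2, h]
  refine ⟨haa, ?_⟩
  have hA : 0 < A := lt_of_le_of_lt (Nat.zero_le a) ha
  have : A * b = A * b' := by omega
  exact Nat.eq_of_mul_eq_mul_left hA this

/-- Ramsey numbers. -/
def Ram : ℕ → ℕ → ℕ
  | 0, _ => 0
  | _+1, 0 => 0
  | a+1, b+1 => Ram a (b+1) + Ram (a+1) b + 1

lemma Ram_pos {a b : ℕ} (ha : 0 < a) (hb : 0 < b) : 0 < Ram a b := by
  obtain ⟨a, rfl⟩ := Nat.exists_eq_succ_of_ne_zero ha.ne'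
  obtain ⟨b, rfl⟩ := Nat.exists_eq_succ_of_ne_zero hb.ne'
  simp only [Ram]
  omega

lemma ramsey {V : Type*} (G : SimpleGraph V) (a : ℕ) :
    ∀ (b : ℕ) (s : Finset V), Ram a b ≤ s.card →
    (∃ t ⊆ s, t.card = a ∧ ∀ u ∈ t, ∀ v ∈ t, u ≠ v → G.Adj u v) ∨
    (∃ t ⊆ s, t.card = b ∧ ∀ u ∈ t, ∀ v ∈ t, u ≠ v → ¬ G.Adj u v) := by
  classical
  induction a with
  | zero =>
    intro b s _
    exact Or.inl ⟨∅, Finset.empty_subset _, Finset.card_empty, by simp⟩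
  | succ a iha =>
    intro b
    induction b with
    | zero =>
      intro s _
      exact Or.inr ⟨∅, Finset.empty_subset _, Finset.card_empty, by simp⟩
    | succ b ihb =>
      intro s hs
      have hR : Ram (a+1) (b+1) = Ram a (b+1) + Ram (a+1) b + 1 := by
        simp only [Ram]
      have hpos : 0 < s.card := by omega
      obtain ⟨x, hx⟩ := Finset.card_pos.mp hpos
      set P := (s.erase x).filter (fun v => G.Adj x v) with hPdef
      set Q := (s.erase x).filter (fun v => ¬ G.Adj x v) with hQdef
      have hPQ : P.card + Q.card = s.card - 1 := by
        rw [hPdef, hQdef, Finset.card_filter_add_card_filter_not,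
          Finset.card_erase_of_mem hx]
      have hPs : P ⊆ s := (Finset.filter_subset _ _).trans (Finset.erase_subset _ _)
      have hQs : Q ⊆ s := (Finset.filter_subset _ _).trans (Finset.erase_subset _ _)
      have hcase : Ram a (b+1) ≤ P.card ∨ Ram (a+1) b ≤ Q.card := by omega
      rcases hcase with h | h
      · rcases iha (b+1) P h with ⟨t, ht, hc, hcl⟩ | ⟨t, ht, hc, hind⟩
        · refine Or.inl ⟨insert x t, ?_, ?_, ?_⟩
          · exact Finset.insert_subset (by exact hx) (ht.trans hPs)
          · have hxt : x ∉ t := fun hxt => (Finset.mem_erase.mp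
              (Finset.filter_subset _ _ (ht hxt))).1 rfl
            rw [Finset.card_insert_of_notMem hxt, hc]
          · intro u hu v hv huv
            have hx' : ∀ w ∈ t, G.Adj x w := fun w hw => (Finset.mem_filter.mp (ht hw)).2
            rcases Finset.mem_insert.mp hu with hux | hut <;>
              rcases Finset.mem_insert.mp hv with hvx | hvt
            · exact absurd (hux.trans hvx.symm) huv
            · subst hux; exact hx' v hvt
            · subst hvx; exact (hx' u hut).symm
            · exact hcl u hut v hvt huv
        · exact Or.inr ⟨t, ht.trans hPs, hc, hind⟩
      · rcases ihb Q h with ⟨t, ht, hc, hcl⟩ | ⟨t, ht, hc, hind⟩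
        · exact Or.inl ⟨t, ht.trans hQs, hc, hcl⟩
        · refine Or.inr ⟨insert x t, ?_, ?_, ?_⟩
          · exact Finset.insert_subset (by exact hx) (ht.trans hQs)
          · have hxt : x ∉ t := fun hxt => (Finset.mem_erase.mp
              (Finset.filter_subset _ _ (ht hxt))).1 rfl
            rw [Finset.card_insert_of_notMem hxt, hc]
          · intro u hu v hv huv
            have hx' : ∀ w ∈ t, ¬ G.Adj x w := fun w hw => (Finset.mem_filter.mp (ht hw)).2
            rcases Finset.mem_insert.mp hu with hux | hut <;>
              rcases Finset.mem_insert.mp hv with hvx | hvt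
            · exact absurd (hux.trans hvx.symm) huv
            · subst hux; exact hx' v hvt
            · subst hvx; exact fun hadj => hx' u hut hadj.symm
            · exact hind u hut v hvt huv


variable {V : Type*} {G : SimpleGraph V}

/-- Prefix of a walk. -/
def wtake {u v : V} : (p : G.Walk u v) → (i : ℕ) → G.Walk u (p.getVert i)
  | SimpleGraph.Walk.nil, _ => SimpleGraph.Walk.nil
  | SimpleGraph.Walk.cons _ _, 0 => SimpleGraph.Walk.nil
  | SimpleGraph.Walk.cons h q, (i+1) => SimpleGraph.Walk.cons h (wtake q i)

lemma length_wtake {u v : V} (p : G.Walk u v) : ∀ i, (wtake p i).length ≤ i := by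
  induction p with
  | nil => intro i; simp [wtake]
  | cons h q ih =>
    intro i
    cases i with
    | zero => simp [wtake]; rfl
    | succ i => simpa [wtake] using ih i

/-- Suffix of a walk. -/
def wdrop {u v : V} : (p : G.Walk u v) → (i : ℕ) → G.Walk (p.getVert i) v
  | SimpleGraph.Walk.nil, _ => SimpleGraph.Walk.nil
  | SimpleGraph.Walk.cons h q, 0 => SimpleGraph.Walk.cons h q
  | SimpleGraph.Walk.cons _ q, (i+1) => wdrop q i

lemma length_wdrop {u v : V} (p : G.Walk u v) : ∀ i, (wdrop p i).length ≤ p.length - i := by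
  induction p with
  | nil => intro i; simp [wdrop]
  | cons h q ih =>
    intro i
    cases i with
    | zero => simp [wdrop]; exact le_of_eq rfl
    | succ i =>
      have := ih i
      show (wdrop q i).length ≤ q.length + 1 - (i + 1)
      omega

lemma dist_getVert_le {u v : V} (p : G.Walk u v) (i : ℕ) :
    G.dist u (p.getVert i) ≤ i :=
  (SimpleGraph.dist_le (wtake p i)).trans (length_wtake p i)

lemma reachable_getVert {u v : V} (p : G.Walk u v) (i : ℕ) :
    G.Reachable u (p.getVert i) := ⟨wtake p i⟩

lemma dist_le_succ_of_adj {r x z : V} (h : G.Reachable r x) (hadj : G.Adj x z) :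
    G.dist r z ≤ G.dist r x + 1 := by
  obtain ⟨p, _, hl⟩ := h.exists_path_of_dist
  calc G.dist r z ≤ (p.concat hadj).length := SimpleGraph.dist_le _
    _ = p.length + 1 := SimpleGraph.Walk.length_concat _ _
    _ = G.dist r x + 1 := by rw [hl]

/-- A shortest walk has no repeated vertices and no chords among `getVert`s. -/
lemma shortest_no_chord {u v : V} (p : G.Walk u v) (hl : p.length = G.dist u v)
    {i j : ℕ} (hij : i < j) (hjl : j ≤ p.length)
    (h : G.Adj (p.getVert i) (p.getVert j)) : j = i + 1 := by
  by_contra hne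
  have hij2 : i + 1 < j := by omega
  have hw : ((wtake p i).append (SimpleGraph.Walk.cons h (wdrop p j))).length
      ≤ i + 1 + (p.length - j) := by
    have h1 := length_wtake p i
    have h2 := length_wdrop p j
    simp only [SimpleGraph.Walk.length_append, SimpleGraph.Walk.length_cons]
    omega
  have := SimpleGraph.dist_le ((wtake p i).append (SimpleGraph.Walk.cons h (wdrop p j)))
  omega

lemma shortest_getVert_inj {u v : V} (p : G.Walk u v) (hl : p.length = G.dist u v)
    {i j : ℕ} (hil : i ≤ p.length) (hjl : j ≤ p.length)
    (h : p.getVert i = p.getVert j) : i = j := by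
  by_contra hne
  wlog hij : i < j generalizing i j
  · exact this hjl hil h.symm (Ne.symm hne) (by omega)
  have hw : ((wtake p i).append ((wdrop p j).copy h.symm rfl)).length
      ≤ i + (p.length - j) := by
    have h1 := length_wtake p i
    have h2 := length_wdrop p j
    simp only [SimpleGraph.Walk.length_append, SimpleGraph.Walk.length_copy]
    omega
  have := SimpleGraph.dist_le ((wtake p i).append ((wdrop p j).copy h.symm rfl))
  omega

lemma hasInducedCopy_path_of_reachable {u v : V} (h : G.Reachable u v) :
    HasInducedCopy G (pathGraph (G.dist u v + 1)) := by
  obtain ⟨p, hp, hl⟩ := h.exists_path_of_dist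
  have hlen : ∀ i : Fin (G.dist u v + 1), (i : ℕ) ≤ p.length := by
    intro i; omega
  have hinj : Function.Injective (fun i : Fin (G.dist u v + 1) => p.getVert i) := by
    intro i j hij
    exact Fin.ext (shortest_getVert_inj p hl (hlen i) (hlen j) hij)
  refine ⟨⟨fun i => p.getVert i, hinj⟩, ?_⟩
  intro a b
  simp only [Function.Embedding.coeFn_mk, pathGraph_adj]
  constructor
  · intro hadj
    rcases lt_trichotomy (a : ℕ) (b : ℕ) with hab | hab | hab
    · exact Or.inl (shortest_no_chord p hl hab (hlen b) hadj).symm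
    · have hab' : a = b := Fin.ext hab
      subst hab'
      exact (G.irrefl hadj).elim
    · exact Or.inr (shortest_no_chord p hl hab (hlen a) hadj.symm).symm
  · intro hab
    rcases hab with hab | hab
    · have : (a : ℕ) < p.length := by omega
      have := p.adj_getVert_succ this
      rwa [hab] at this
    · have : (b : ℕ) < p.length := by omega
      have := p.adj_getVert_succ this
      rw [hab] at this
      exact this.symm

/-- Restriction of path copies. -/
lemma path_copy_mono {m k : ℕ} (h : k ≤ m) (hc : HasInducedCopy G (pathGraph m)) :
    HasInducedCopy G (pathGraph k) := by
  obtain ⟨f, hf⟩ := hc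
  refine ⟨(Fin.castLEEmb h).trans f, ?_⟩
  intro a b
  simp only [Function.Embedding.trans_apply]
  rw [hf]
  simp [pathGraph_adj, Fin.castLEEmb, Fin.castLE]

/-- In a `P_n`-free graph distances are at most `n - 2`. -/
lemma dist_add_two_le {n : ℕ} (hn : 2 ≤ n) (hP : ¬ HasInducedCopy G (pathGraph n))
    {u v : V} (h : G.Reachable u v) : G.dist u v + 2 ≤ n := by
  by_contra hlt
  exact hP (path_copy_mono (by omega) (hasInducedCopy_path_of_reachable h))

/-- Copies in induced subgraphs are copies. -/
lemma hasInducedCopy_of_induce {W : Type*} {A : Set V} {H : SimpleGraph W}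
    (h : HasInducedCopy (G.induce A) H) : HasInducedCopy G H := by
  obtain ⟨f, hf⟩ := h
  refine ⟨f.trans (Function.Embedding.subtype _), ?_⟩
  intro a b
  rw [← hf a b]
  simp [SimpleGraph.comap_adj, Function.Embedding.subtype]

lemma cliqueFree_induce {A : Set V} {k : ℕ} (h : G.CliqueFree k) :
    (G.induce A).CliqueFree k := by
  classical
  intro t ht
  refine h (t.image (Subtype.val)) ⟨?_, ?_⟩
  · intro x hx y hy hxy
    simp only [Finset.coe_image, Set.mem_image, Finset.mem_coe] at hx hy
    obtain ⟨x', hx', rfl⟩ := hx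
    obtain ⟨y', hy', rfl⟩ := hy
    have hne : x' ≠ y' := fun hh => hxy (by rw [hh])
    exact ht.1 hx' hy' hne
  · rw [Finset.card_image_of_injective _ Subtype.val_injective, ht.2]

lemma cliqueFree_of_not_copy {k : ℕ}
    (h : ¬ HasInducedCopy G (completeGraph (Fin k))) : G.CliqueFree k := by
  intro s hs
  apply h
  have e : ↥s ≃ Fin k := s.equivFinOfCardEq hs.2
  refine ⟨⟨fun i => (e.symm i : V), ?_⟩, ?_⟩
  · intro i j hij
    exact e.symm.injective (Subtype.val_injective hij)
  · intro a b
    simp only [completeGraph_eq_top, top_adj]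
    constructor
    · intro hadj hab
      rw [hab] at hadj
      exact G.irrefl hadj
    · intro hab
      have h1 : (e.symm a : V) ≠ (e.symm b : V) :=
        fun hh => hab (e.symm.injective (Subtype.val_injective hh))
      exact hs.1 (e.symm a).2 (e.symm b).2 h1

/-- Neighborhoods in a `K_{k+1}`-free graph are `K_k`-free. -/
lemma cliqueFree_nbhd {k : ℕ} (h : G.CliqueFree (k+1)) (d : V) :
    (G.induce {v | G.Adj d v}).CliqueFree k := by
  classical
  intro t ht
  have hd : d ∉ t.image (Subtype.val) := by
    intro hd
    simp only [Finset.mem_image] at hd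
    obtain ⟨x, _, hx⟩ := hd
    exact G.irrefl (hx ▸ x.2)
  refine h (insert d (t.image (Subtype.val))) ⟨?_, ?_⟩
  · intro x hx y hy hxy
    simp only [Finset.coe_insert, Set.mem_insert_iff, Finset.coe_image,
      Set.mem_image, Finset.mem_coe] at hx hy
    rcases hx with rfl | ⟨x', hx', rfl⟩
    · rcases hy with rfl | ⟨y', hy', rfl⟩
      · exact absurd rfl hxy
      · exact y'.2
    · rcases hy with rfl | ⟨y', hy', rfl⟩
      · exact (x'.2).symm
      · exact ht.1 hx' hy' (fun hh => hxy (by rw [hh]))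
  · rw [Finset.card_insert_of_notMem hd,
      Finset.card_image_of_injective _ Subtype.val_injective, ht.2]



lemma sstar_adj {n : ℕ} (a b : Unit ⊕ Fin n ⊕ Fin n) :
    (SStar n).Adj a b ↔
      (∃ i, a = Sum.inl () ∧ b = Sum.inr (Sum.inl i)) ∨
      (∃ i, b = Sum.inl () ∧ a = Sum.inr (Sum.inl i)) ∨
      (∃ i : Fin n, a = Sum.inr (Sum.inl i) ∧ b = Sum.inr (Sum.inr i)) ∨
      (∃ i : Fin n, b = Sum.inr (Sum.inl i) ∧ a = Sum.inr (Sum.inr i)) := by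
  simp only [SStar, SimpleGraph.fromRel_adj]
  constructor
  · rintro ⟨hne, (⟨i, h1, h2⟩ | ⟨i, h1, h2⟩) | (⟨i, h1, h2⟩ | ⟨i, h1, h2⟩)⟩
    · exact Or.inl ⟨i, h1, h2⟩
    · exact Or.inr (Or.inr (Or.inl ⟨i, h1, h2⟩))
    · exact Or.inr (Or.inl ⟨i, h1, h2⟩)
    · exact Or.inr (Or.inr (Or.inr ⟨i, h1, h2⟩))
  · rintro (⟨i, h1, h2⟩ | ⟨i, h1, h2⟩ | ⟨i, h1, h2⟩ | ⟨i, h1, h2⟩) <;> subst h1 <;> subst h2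
    · exact ⟨by simp, Or.inl (Or.inl ⟨i, rfl, rfl⟩)⟩
    · exact ⟨by simp, Or.inr (Or.inl ⟨i, rfl, rfl⟩)⟩
    · exact ⟨by simp, Or.inl (Or.inr ⟨i, rfl, rfl⟩)⟩
    · exact ⟨by simp, Or.inr (Or.inr ⟨i, rfl, rfl⟩)⟩

variable {V : Type*} {G : SimpleGraph V}

lemma no_sstar_config {n : ℕ} (hS : ¬ HasInducedCopy G (SStar n))
    (x : V) (y z : Fin n → V)
    (hyinj : Function.Injective y)
    (hxy : ∀ i, G.Adj x (y i))
    (hyz : ∀ i, G.Adj (y i) (z i))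
    (hyy : ∀ i j, i ≠ j → ¬ G.Adj (y i) (y j))
    (hzz : ∀ i j, i ≠ j → ¬ G.Adj (z i) (z j))
    (hyz' : ∀ i j, i ≠ j → ¬ G.Adj (y i) (z j))
    (hxz : ∀ i, ¬ G.Adj x (z i))
    (hxz0 : ∀ i, x ≠ z i) : False := by
  apply hS
  -- basic distinctness
  have hxy0 : ∀ i, x ≠ y i := fun i => (hxy i).ne
  have hyzne : ∀ i, y i ≠ z i := fun i => (hyz i).ne
  have hzzne : ∀ i j, i ≠ j → z i ≠ z j := by
    intro i j hij heq
    exact hyz' i j hij (heq ▸ hyz i)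
  have hyzne' : ∀ i j, y i ≠ z j := by
    intro i j heq
    rcases eq_or_ne i j with rfl | hij
    · exact hyzne i heq
    · exact hzz j i (Ne.symm hij) (heq ▸ (hyz i))
  set f : Unit ⊕ Fin n ⊕ Fin n → V := fun a =>
    match a with
    | Sum.inl _ => x
    | Sum.inr (Sum.inl i) => y i
    | Sum.inr (Sum.inr i) => z i with hf
  have hinj : Function.Injective f := by
    rintro (u | i | i) (w | j | j) hab <;> simp only [hf] at hab
    · rfl
    · exact absurd hab (hxy0 j)
    · exact absurd hab (hxz0 j)
    · exact absurd hab.symm (hxy0 i)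
    · rw [hyinj hab]
    · exact absurd hab (hyzne' i j)
    · exact absurd hab.symm (hxz0 i)
    · exact absurd hab.symm (hyzne' j i)
    · by_cases hij : i = j
      · rw [hij]
      · exact absurd hab (hzzne i j hij)
  refine ⟨⟨f, hinj⟩, ?_⟩
  have refute : ∀ (a b : Unit ⊕ Fin n ⊕ Fin n),
      (∀ i : Fin n, ¬(a = Sum.inl () ∧ b = Sum.inr (Sum.inl i))) →
      (∀ i : Fin n, ¬(b = Sum.inl () ∧ a = Sum.inr (Sum.inl i))) →
      (∀ i : Fin n, ¬(a = Sum.inr (Sum.inl i) ∧ b = Sum.inr (Sum.inr i))) →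
      (∀ i : Fin n, ¬(b = Sum.inr (Sum.inl i) ∧ a = Sum.inr (Sum.inr i))) →
      ¬ ((∃ i, a = Sum.inl () ∧ b = Sum.inr (Sum.inl i)) ∨
      (∃ i, b = Sum.inl () ∧ a = Sum.inr (Sum.inl i)) ∨
      (∃ i : Fin n, a = Sum.inr (Sum.inl i) ∧ b = Sum.inr (Sum.inr i)) ∨
      (∃ i : Fin n, b = Sum.inr (Sum.inl i) ∧ a = Sum.inr (Sum.inr i))) := by
    rintro a b h1 h2 h3 h4 (⟨m, hm⟩ | ⟨m, hm⟩ | ⟨m, hm⟩ | ⟨m, hm⟩)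
    · exact h1 m hm
    · exact h2 m hm
    · exact h3 m hm
    · exact h4 m hm
  rintro (u | i | i) (w | j | j) <;>
    simp only [Function.Embedding.coeFn_mk, hf] <;> rw [sstar_adj]
  · refine iff_of_false (G.irrefl) (refute _ _ ?_ ?_ ?_ ?_) <;> rintro m ⟨hm1, hm2⟩ <;>
      simp at hm1 hm2
  · exact iff_of_true (hxy j) (Or.inl ⟨j, rfl, rfl⟩)
  · refine iff_of_false (hxz j) (refute _ _ ?_ ?_ ?_ ?_) <;> rintro m ⟨hm1, hm2⟩ <;>
      simp at hm1 hm2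
  · exact iff_of_true (hxy i).symm (Or.inr (Or.inl ⟨i, rfl, rfl⟩))
  · -- y i vs y j
    have hne : ¬ G.Adj (y i) (y j) := by
      by_cases hij : i = j
      · subst hij; exact G.irrefl
      · exact hyy i j hij
    refine iff_of_false hne (refute _ _ ?_ ?_ ?_ ?_) <;> rintro m ⟨hm1, hm2⟩ <;>
      simp at hm1 hm2
  · -- y i vs z j
    by_cases hij : i = j
    · subst hij
      exact iff_of_true (hyz i) (Or.inr (Or.inr (Or.inl ⟨i, rfl, rfl⟩)))
    · refine iff_of_false (hyz' i j hij) (refute _ _ ?_ ?_ ?_ ?_) <;>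
        rintro m ⟨hm1, hm2⟩ <;> simp only [Sum.inr.injEq, Sum.inl.injEq, reduceCtorEq] at hm1 hm2
      exact hij (hm1.trans hm2.symm)
  · refine iff_of_false (fun h => hxz i h.symm) (refute _ _ ?_ ?_ ?_ ?_) <;>
      rintro m ⟨hm1, hm2⟩ <;> simp at hm1 hm2
  · -- z i vs y j
    by_cases hij : i = j
    · subst hij
      exact iff_of_true (hyz i).symm (Or.inr (Or.inr (Or.inr ⟨i, rfl, rfl⟩)))
    · refine iff_of_false (fun h => hyz' j i (Ne.symm hij) h.symm) (refute _ _ ?_ ?_ ?_ ?_) <;>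
        rintro m ⟨hm1, hm2⟩ <;> simp only [Sum.inr.injEq, Sum.inl.injEq, reduceCtorEq] at hm1 hm2
      exact hij (hm2.trans hm1.symm)
  · -- z i vs z j
    have hne : ¬ G.Adj (z i) (z j) := by
      by_cases hij : i = j
      · subst hij; exact G.irrefl
      · exact hzz i j hij
    refine iff_of_false hne (refute _ _ ?_ ?_ ?_ ?_) <;> rintro m ⟨hm1, hm2⟩ <;>
      simp at hm1 hm2



lemma exists_level_dom {n k : ℕ} (hn : 1 ≤ n) (hk : 2 ≤ k) {V : Type*} [Fintype V]
    {G : SimpleGraph V}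
    (hS : ¬ HasInducedCopy G (SStar n)) (hK : G.CliqueFree k) (r : V) :
    ∃ D : ℕ → Finset V,
      (∀ i, ∀ d ∈ D i, G.Reachable r d ∧ G.dist r d = i) ∧
      (∀ i, ∀ v : V, G.Reachable r v → G.dist r v = i + 1 → ∃ d ∈ D i, G.Adj d v) ∧
      (∀ i, (D i).card ≤ (Ram (k-1) (Ram k n)) ^ i) := by
  classical
  set M := Ram (k-1) (Ram k n) with hM
  have hM1 : 1 ≤ M := Ram_pos (by omega) (Ram_pos (by omega) (by omega))
  set L : ℕ → Finset V :=
    fun i => Finset.univ.filter (fun v => G.Reachable r v ∧ G.dist r v = i) with hL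
  have memL : ∀ i (v : V), v ∈ L i ↔ (G.Reachable r v ∧ G.dist r v = i) := by
    intro i v; simp [hL]
  have domL : ∀ i, ∀ v ∈ L (i+1), ∃ d ∈ L i, G.Adj d v := by
    intro i v hv
    rw [memL] at hv
    obtain ⟨hr, hd⟩ := hv
    obtain ⟨p, hp, hl⟩ := hr.exists_path_of_dist
    have hadj : G.Adj (p.getVert i) v := by
      have hi : i < p.length := by omega
      have h2 := p.adj_getVert_succ hi
      have hv' : p.getVert (i+1) = v := by
        have hh : i + 1 = p.length := by omega
        rw [hh, SimpleGraph.Walk.getVert_length]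
      rwa [hv'] at h2
    refine ⟨p.getVert i, ?_, hadj⟩
    rw [memL]
    refine ⟨reachable_getVert p i, ?_⟩
    have h1 : G.dist r (p.getVert i) ≤ i := dist_getVert_le p i
    have h2 : G.dist r v ≤ G.dist r (p.getVert i) + 1 :=
      dist_le_succ_of_adj (reachable_getVert p i) hadj
    omega
  set Cand : ℕ → Finset (Finset V) :=
    fun i => (L i).powerset.filter (fun A => ∀ v ∈ L (i+1), ∃ d ∈ A, G.Adj d v) with hCand
  have hex : ∀ i, ∃ A ∈ Cand i, ∀ B ∈ Cand i, A.card ≤ B.card := by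
    intro i
    apply Finset.exists_min_image
    refine ⟨L i, ?_⟩
    rw [hCand, Finset.mem_filter, Finset.mem_powerset]
    exact ⟨le_refl _, domL i⟩
  set D : ℕ → Finset V := fun i => if i = 0 then {r} else (hex i).choose with hD
  have hDspec : ∀ i, i ≠ 0 → (D i ∈ Cand i ∧ ∀ B ∈ Cand i, (D i).card ≤ B.card) := by
    intro i hi
    have h1 := (hex i).choose_spec
    have h2 : D i = (hex i).choose := by rw [hD]; simp [hi]
    rw [h2]
    exact h1
  have hDsub : ∀ i, i ≠ 0 → D i ⊆ L i := by
    intro i hi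
    have := (hDspec i hi).1
    rw [hCand, Finset.mem_filter, Finset.mem_powerset] at this
    exact this.1
  have prop1 : ∀ i, ∀ d ∈ D i, G.Reachable r d ∧ G.dist r d = i := by
    intro i d hd
    by_cases hi : i = 0
    · subst hi
      have : d = r := by
        rw [hD] at hd; simpa using hd
      subst this
      exact ⟨Reachable.refl _, SimpleGraph.dist_self⟩
    · exact (memL i d).mp (hDsub i hi hd)
  have prop2 : ∀ i, ∀ v : V, G.Reachable r v → G.dist r v = i + 1 → ∃ d ∈ D i, G.Adj d v := by
    intro i v hrv hdv
    by_cases hi : i = 0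
    · subst hi
      refine ⟨r, by rw [hD]; simp, ?_⟩
      rw [← SimpleGraph.dist_eq_one_iff_adj]
      exact hdv
    · have := (hDspec i hi).1
      rw [hCand, Finset.mem_filter, Finset.mem_powerset] at this
      exact this.2 v ((memL (i+1) v).mpr ⟨hrv, hdv⟩)
  refine ⟨D, prop1, prop2, ?_⟩
  -- cardinality bound
  have step : ∀ i, (D (i+1)).card ≤ M * (D i).card := by
    intro i
    by_contra hbig
    push_neg at hbig
    -- private neighbours
    have priv : ∀ d ∈ D (i+1), ∃ z, z ∈ L (i+2) ∧ G.Adj d z ∧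
        ∀ d' ∈ D (i+1), d' ≠ d → ¬ G.Adj d' z := by
      intro d hd
      by_contra hcon
      push_neg at hcon
      have hspec := hDspec (i+1) (Nat.succ_ne_zero i)
      have hdom := hspec.1
      rw [hCand, Finset.mem_filter, Finset.mem_powerset] at hdom
      have herase : (D (i+1)).erase d ∈ Cand (i+1) := by
        rw [hCand, Finset.mem_filter, Finset.mem_powerset]
        constructor
        · exact (Finset.erase_subset _ _).trans hdom.1
        · intro v hv
          obtain ⟨e, he, hadj⟩ := hdom.2 v hv
          by_cases hed : e = d
          · subst hed
            obtain ⟨d', hd', hne, hadj'⟩ := hcon v hv hadj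
            exact ⟨d', Finset.mem_erase.mpr ⟨hne, hd'⟩, hadj'⟩
          · exact ⟨e, Finset.mem_erase.mpr ⟨hed, he⟩, hadj⟩
      have hmin := hspec.2 _ herase
      have hlt : ((D (i+1)).erase d).card < (D (i+1)).card :=
        Finset.card_erase_lt_of_mem hd
      omega
    have priv' : ∀ d : V, ∃ z : V, d ∈ D (i+1) → (z ∈ L (i+2) ∧ G.Adj d z ∧
        ∀ d' ∈ D (i+1), d' ≠ d → ¬ G.Adj d' z) := by
      intro d
      by_cases hd : d ∈ D (i+1)
      · obtain ⟨z, hz⟩ := priv d hd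
        exact ⟨z, fun _ => hz⟩
      · exact ⟨r, fun h => absurd h hd⟩
    choose zf hzf using priv'
    have hg : ∀ d : V, ∃ x : V, d ∈ D (i+1) → (x ∈ D i ∧ G.Adj x d) := by
      intro d
      by_cases hd : d ∈ D (i+1)
      · have h1 := prop1 (i+1) d hd
        obtain ⟨x, hx, hadj⟩ := prop2 i d h1.1 h1.2
        exact ⟨x, fun _ => ⟨hx, hadj⟩⟩
      · exact ⟨r, fun h => absurd h hd⟩
    choose g hgf using hg
    have hmaps : ∀ d ∈ D (i+1), g d ∈ D i := fun d hd => (hgf d hd).1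
    have hpig : ∃ x ∈ D i, (M - 1) < ((D (i+1)).filter (fun d => g d = x)).card := by
      apply Finset.exists_lt_card_fiber_of_mul_lt_card_of_maps_to hmaps
      calc (D i).card * (M - 1) ≤ (D i).card * M := Nat.mul_le_mul_left _ (by omega)
        _ = M * (D i).card := Nat.mul_comm _ _
        _ < (D (i+1)).card := hbig
    obtain ⟨x, hxDi, hfib⟩ := hpig
    set F := (D (i+1)).filter (fun d => g d = x) with hF
    have hFD : F ⊆ D (i+1) := Finset.filter_subset _ _
    have hFadj : ∀ d ∈ F, G.Adj x d := by
      intro d hd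
      rw [hF, Finset.mem_filter] at hd
      have := (hgf d hd.1).2
      rwa [hd.2] at this
    have hFcard : M ≤ F.card := by omega
    have hzinj : ∀ d ∈ D (i+1), ∀ d' ∈ D (i+1), zf d = zf d' → d = d' := by
      intro d hd d' hd' heq
      by_contra hne
      have h1 := (hzf d hd).2.1
      have h3 := (hzf d' hd').2.2 d hd hne
      rw [← heq] at h3
      exact h3 h1
    have hRam1 : Ram (k-1) (Ram k n) ≤ F.card := by rw [← hM]; exact hFcard
    rcases ramsey G (k-1) (Ram k n) F hRam1 with ⟨t, htF, htc, htcl⟩ | ⟨t, htF, htc, htind⟩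
    · -- clique of size k-1 in the neighbourhood of x : contradiction
      have hxt : x ∉ t := fun hxt => G.irrefl (hFadj x (htF hxt))
      refine hK (insert x t) ⟨?_, ?_⟩
      · intro u hu w hw hne
        simp only [Finset.coe_insert, Set.mem_insert_iff, Finset.mem_coe] at hu hw
        rcases hu with rfl | hu
        · rcases hw with rfl | hw
          · exact absurd rfl hne
          · exact hFadj w (htF hw)
        · rcases hw with rfl | hw
          · exact (hFadj u (htF hu)).symm
          · exact htcl u hu w hw hne
      · rw [Finset.card_insert_of_notMem hxt, htc]
        omega
    · -- independent set of size Ram k n : look at private neighbours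
      set Aux : SimpleGraph V := SimpleGraph.fromRel (fun a b => G.Adj (zf a) (zf b)) with hAux
      have htD : t ⊆ D (i+1) := htF.trans hFD
      rcases ramsey Aux k n t (le_of_eq htc.symm) with ⟨s, hst, hsc, hscl⟩ | ⟨s, hst, hsc, hsind⟩
      · -- clique of size k among the private neighbours : contradiction
        have hsD : s ⊆ D (i+1) := hst.trans htD
        refine hK (s.image zf) ⟨?_, ?_⟩
        · intro u hu w hw hne
          simp only [Finset.coe_image, Set.mem_image, Finset.mem_coe] at hu hw
          obtain ⟨a, ha, rfl⟩ := hu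
          obtain ⟨b, hb, rfl⟩ := hw
          have hab : a ≠ b := fun h => hne (by rw [h])
          have := hscl a ha b hb hab
          rw [hAux, SimpleGraph.fromRel_adj] at this
          rcases this.2 with h | h
          · exact h
          · exact h.symm
        · rw [Finset.card_image_of_injOn, hsc]
          intro a ha b hb
          exact hzinj a (hsD ha) b (hsD hb)
      · -- independent: build an induced S*_n
        have hsD : s ⊆ D (i+1) := hst.trans htD
        have hsF : s ⊆ F := hst.trans htF
        have e : ↥s ≃ Fin n := s.equivFinOfCardEq hsc
        set y : Fin n → V := fun a => (e.symm a : V) with hy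
        set z : Fin n → V := fun a => zf (y a) with hz
        have hymem : ∀ a, y a ∈ s := fun a => (e.symm a).2
        have hyinj : Function.Injective y := by
          intro a b hab
          exact e.symm.injective (Subtype.val_injective hab)
        have hyne : ∀ a b : Fin n, a ≠ b → y a ≠ y b := fun a b hab h => hab (hyinj h)
        have hxL : G.dist r x = i := (prop1 i x hxDi).2
        have hxreach : G.Reachable r x := (prop1 i x hxDi).1
        have hzL : ∀ a, G.dist r (z a) = i + 2 := by
          intro a
          have := ((hzf (y a) (hsD (hymem a))).1)
          exact ((memL (i+2) (z a)).mp this).2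
        refine no_sstar_config hS x y z hyinj ?_ ?_ ?_ ?_ ?_ ?_ ?_
        · intro a; exact hFadj (y a) (hsF (hymem a))
        · intro a; exact (hzf (y a) (hsD (hymem a))).2.1
        · intro a b hab
          exact htind (y a) (hst (hymem a)) (y b) (hst (hymem b)) (hyne a b hab)
        · intro a b hab hadj
          have h2 := hsind (y a) (hymem a) (y b) (hymem b) (hyne a b hab)
          rw [hAux, SimpleGraph.fromRel_adj] at h2
          exact h2 ⟨hyne a b hab, Or.inl hadj⟩
        · intro a b hab
          exact (hzf (y b) (hsD (hymem b))).2.2 (y a) (hsD (hymem a)) (hyne a b hab)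
        · intro a hadj
          have h1 := dist_le_succ_of_adj hxreach hadj
          rw [hxL, hzL a] at h1
          omega
        · intro a heq
          have := hzL a
          rw [← heq, hxL] at this
          omega
  -- conclude by induction
  intro i
  induction i with
  | zero =>
    rw [hD]
    simp
  | succ i ih =>
    calc (D (i+1)).card ≤ M * (D i).card := step i
      _ ≤ M * M ^ i := Nat.mul_le_mul_left _ ih
      _ = M ^ (i+1) := by rw [pow_succ, Nat.mul_comm]

lemma chi_step (n k Q : ℕ) (hn : 4 ≤ n) (hk : 2 ≤ k) (hQ1 : 1 ≤ Q)
    (IH : ∀ (V : Type) [Fintype V] (G : SimpleGraph V),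
      ¬ HasInducedCopy G (SStar n) → ¬ HasInducedCopy G (pathGraph n) → G.CliqueFree k →
      ∃ f : V → ℕ, (∀ v, f v < Q) ∧ ∀ v w, G.Adj v w → f v ≠ f w) :
    ∀ (N : ℕ) (V : Type) [Fintype V] (G : SimpleGraph V), Fintype.card V ≤ N →
      ¬ HasInducedCopy G (SStar n) → ¬ HasInducedCopy G (pathGraph n) → G.CliqueFree (k+1) →
      ∃ f : V → ℕ, (∀ v, f v < n * ((Ram k (Ram (k+1) n)) ^ n * Q) + 1) ∧
        ∀ v w, G.Adj v w → f v ≠ f w := by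
  intro N
  induction N with
  | zero =>
    intro V _ G hcard hS hP hK
    have hVe : IsEmpty V := by
      rw [← Fintype.card_eq_zero_iff]; omega
    exact ⟨fun _ => 0, fun v => Nat.lt_succ_of_le (Nat.zero_le _),
      fun v w _ => (hVe.false v).elim⟩
  | succ N ihN =>
    intro V _ G hcard hS hP hK
    classical
    by_cases hV : Nonempty V
    case neg =>
      exact ⟨fun _ => 0, fun v => Nat.lt_succ_of_le (Nat.zero_le _),
        fun v w _ => absurd ⟨v⟩ hV⟩
    obtain ⟨r⟩ := hV
    set M := Ram k (Ram (k+1) n) with hMdef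
    have hM1 : 1 ≤ M := Ram_pos (by omega) (Ram_pos (by omega) (by omega))
    obtain ⟨D, hD1, hD2, hD3⟩ :=
      exists_level_dom (n := n) (k := k+1) (by omega) (by omega) hS hK r
    have hD3' : ∀ i, (D i).card ≤ M ^ i := by
      intro i
      have h := hD3 i
      simpa [hMdef] using h
    -- subcolorings of neighbourhoods
    have sub : ∀ d : V, ∃ f : ↥{v : V | G.Adj d v} → ℕ, (∀ v, f v < Q) ∧
        ∀ v w, (G.induce {v : V | G.Adj d v}).Adj v w → f v ≠ f w :=
      fun d => IH ↥{v : V | G.Adj d v} (G.induce _)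
        (fun h => hS (hasInducedCopy_of_induce h))
        (fun h => hP (hasInducedCopy_of_induce h))
        (cliqueFree_nbhd hK d)
    choose cd hcd1 hcd2 using sub
    -- an index for the vertices of each dominating set
    set idx : ℕ → V → ℕ := fun j d => if h : d ∈ D j then
        ((D j).equivFin ⟨d, h⟩ : Fin _).val else 0 with hidx
    have idx_lt : ∀ j, ∀ d ∈ D j, idx j d < (D j).card := by
      intro j d hd
      rw [hidx]
      simp only
      rw [dif_pos hd]
      exact ((D j).equivFin ⟨d, hd⟩).isLt
    have idx_inj : ∀ j, ∀ d ∈ D j, ∀ d' ∈ D j, idx j d = idx j d' → d = d' := by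
      intro j d hd d' hd' heq
      rw [hidx] at heq
      simp only at heq
      rw [dif_pos hd, dif_pos hd'] at heq
      have h2 := (D j).equivFin.injective (Fin.ext heq)
      exact congrArg Subtype.val h2
    -- dominator choice
    have hgex : ∀ v : V, ∃ d : V, (G.Reachable r v ∧ v ≠ r) →
        (d ∈ D (G.dist r v - 1) ∧ G.Adj d v) := by
      intro v
      by_cases h : G.Reachable r v ∧ v ≠ r
      · have hdpos : 1 ≤ G.dist r v := by
          rcases Nat.eq_zero_or_pos (G.dist r v) with h0 | h1
          · exact absurd (h.1.dist_eq_zero_iff.mp h0).symm h.2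
          · exact h1
        obtain ⟨d, hd, hadj⟩ := hD2 (G.dist r v - 1) v h.1 (by omega)
        exact ⟨d, fun _ => ⟨hd, hadj⟩⟩
      · exact ⟨r, fun hh => absurd hh h⟩
    choose dv hdv using hgex
    set sc : V → ℕ := fun v => if h : G.Adj (dv v) v then cd (dv v) ⟨v, h⟩ else 0 with hsc
    set fC : V → ℕ := fun v => if G.Reachable r v ∧ v ≠ r then
        G.dist r v + n * (idx (G.dist r v - 1) (dv v) + M ^ n * sc v) else 0 with hfC
    -- facts about fC for reachable non-root vertices
    have key : ∀ v : V, G.Reachable r v → v ≠ r →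
        fC v = G.dist r v + n * (idx (G.dist r v - 1) (dv v) + M ^ n * sc v) ∧
        dv v ∈ D (G.dist r v - 1) ∧ G.Adj (dv v) v ∧
        ∀ (hadj : G.Adj (dv v) v), sc v = cd (dv v) ⟨v, hadj⟩ := by
      intro v h1 h2
      obtain ⟨hdm, hadj⟩ := hdv v ⟨h1, h2⟩
      refine ⟨by rw [hfC]; simp [h1, h2], hdm, hadj, ?_⟩
      intro hadj'
      rw [hsc]
      simp [hadj']
    have fCbound : ∀ v : V, G.Reachable r v → fC v < n * (M ^ n * Q) := by
      intro v h1
      by_cases h2 : v = r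
      · subst h2
        rw [hfC]
        simp only [ne_eq, not_true_eq_false, and_false, if_false]
        have : 1 ≤ M ^ n := Nat.one_le_pow _ _ (by omega)
        have : 1 ≤ M ^ n * Q := Nat.one_le_iff_ne_zero.mpr (by positivity)
        nlinarith
      · obtain ⟨hfeq, hdm, hadj, hsceq⟩ := key v h1 h2
        have hdist : G.dist r v + 2 ≤ n := dist_add_two_le (by omega) hP h1
        have hj : G.dist r v - 1 ≤ n := by omega
        have hidxlt : idx (G.dist r v - 1) (dv v) < M ^ n := by
          calc idx (G.dist r v - 1) (dv v) < (D (G.dist r v - 1)).card := idx_lt _ _ hdm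
            _ ≤ M ^ (G.dist r v - 1) := hD3' _
            _ ≤ M ^ n := Nat.pow_le_pow_right hM1 hj
        have hsclt : sc v < Q := by
          rw [hsceq hadj]
          exact hcd1 _ _
        rw [hfeq]
        exact pack_lt (by omega) (pack_lt hidxlt hsclt)
    have fCproper : ∀ v w : V, G.Reachable r v → G.Reachable r w → G.Adj v w →
        fC v ≠ fC w := by
      intro v w h1 h2 hadj heq
      by_cases hv : v = r
      · have hw : w ≠ r := by
          intro h
          rw [hv, h] at hadj
          exact G.irrefl hadj
        obtain ⟨hfeq, _, _, _⟩ := key w h2 hw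
        have hd1 : 1 ≤ G.dist r w := by
          rcases Nat.eq_zero_or_pos (G.dist r w) with h0 | h0
          · exact absurd (h2.dist_eq_zero_iff.mp h0).symm hw
          · exact h0
        have hzero : fC v = 0 := by
          rw [hfC]
          simp [hv]
        rw [hzero, hfeq] at heq
        omega
      · by_cases hw : w = r
        · obtain ⟨hfeq, _, _, _⟩ := key v h1 hv
          have hd1 : 1 ≤ G.dist r v := by
            rcases Nat.eq_zero_or_pos (G.dist r v) with h0 | h0
            · exact absurd (h1.dist_eq_zero_iff.mp h0).symm hv
            · exact h0
          have hzero : fC w = 0 := by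
            rw [hfC]
            simp [hw]
          rw [hzero, hfeq] at heq
          omega
        · obtain ⟨hfeqv, hdmv, hadjv, hscv⟩ := key v h1 hv
          obtain ⟨hfeqw, hdmw, hadjw, hscw⟩ := key w h2 hw
          rw [hfeqv, hfeqw] at heq
          have hdvn : G.dist r v + 2 ≤ n := dist_add_two_le (by omega) hP h1
          have hdwn : G.dist r w + 2 ≤ n := dist_add_two_le (by omega) hP h2
          obtain ⟨hde, hrest⟩ := pack_inj (by omega) (by omega) heq
          have hidxv : idx (G.dist r v - 1) (dv v) < M ^ n := by
            calc idx (G.dist r v - 1) (dv v) < (D (G.dist r v - 1)).card := idx_lt _ _ hdmv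
              _ ≤ M ^ (G.dist r v - 1) := hD3' _
              _ ≤ M ^ n := Nat.pow_le_pow_right hM1 (by omega)
          have hidxw : idx (G.dist r w - 1) (dv w) < M ^ n := by
            calc idx (G.dist r w - 1) (dv w) < (D (G.dist r w - 1)).card := idx_lt _ _ hdmw
              _ ≤ M ^ (G.dist r w - 1) := hD3' _
              _ ≤ M ^ n := Nat.pow_le_pow_right hM1 (by omega)
          obtain ⟨hie, hse⟩ := pack_inj hidxv hidxw hrest
          rw [hde] at hdmv hie
          have hdd : dv v = dv w := idx_inj _ _ hdmv _ hdmw hie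
          rw [hdd] at hadjv hscv
          rw [hscv hadjv, hscw hadjw] at hse
          exact hcd2 (dv w) ⟨v, hadjv⟩ ⟨w, hadjw⟩ hadj hse
    -- combine with the coloring of the unreachable part
    set B : Set V := {v : V | ¬ G.Reachable r v} with hB
    have hrB : ¬ (r ∈ B) := by
      simp only [hB, Set.mem_setOf_eq, not_not]
      exact Reachable.refl r
    have hcB : Fintype.card ↥B ≤ N := by
      have hlt : Fintype.card ↥B < Fintype.card V := Fintype.card_subtype_lt (x := r) hrB
      omega
    obtain ⟨fR, hfR1, hfR2⟩ := ihN ↥B (G.induce B) hcB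
      (fun h => hS (hasInducedCopy_of_induce h))
      (fun h => hP (hasInducedCopy_of_induce h)) (cliqueFree_induce hK)
    refine ⟨fun v => if h : G.Reachable r v then fC v else fR ⟨v, h⟩, ?_, ?_⟩
    · intro v
      by_cases h : G.Reachable r v
      · simp only [dif_pos h]
        have := fCbound v h
        omega
      · simp only [dif_neg h]
        exact hfR1 ⟨v, h⟩
    · intro v w hadj heq
      by_cases hv : G.Reachable r v
      · have hw : G.Reachable r w := hv.trans hadj.reachable
        simp only [dif_pos hv, dif_pos hw] at heq
        exact fCproper v w hv hw hadj heq
      · have hw : ¬ G.Reachable r w := fun hw => hv (hw.trans hadj.symm.reachable)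
        simp only [dif_neg hv, dif_neg hw] at heq
        exact hfR2 ⟨v, hv⟩ ⟨w, hw⟩ hadj heq

lemma chi_bound (n : ℕ) (hn : 4 ≤ n) : ∀ k : ℕ, ∃ Q : ℕ, 1 ≤ Q ∧
    ∀ (V : Type) [Fintype V] (G : SimpleGraph V),
      ¬ HasInducedCopy G (SStar n) → ¬ HasInducedCopy G (pathGraph n) → G.CliqueFree k →
      ∃ f : V → ℕ, (∀ v, f v < Q) ∧ ∀ v w, G.Adj v w → f v ≠ f w := by
  intro k
  induction k with
  | zero =>
    refine ⟨1, le_refl 1, ?_⟩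
    intro V _ G _ _ hK
    exact absurd (by simp : (SimpleGraph.IsNClique G 0 ∅)) (hK ∅)
  | succ k ihk =>
    by_cases hk2 : k + 1 ≤ 2
    · refine ⟨1, le_refl 1, ?_⟩
      intro V _ G _ _ hK
      classical
      refine ⟨fun _ => 0, fun v => Nat.lt_succ_of_le (Nat.zero_le _), ?_⟩
      intro v w hadj _
      have hK2 : G.CliqueFree 2 := hK.mono (by omega)
      refine hK2 {v, w} ⟨?_, ?_⟩
      · intro a ha b hb hne
        simp only [Finset.coe_insert, Finset.coe_singleton, Set.mem_insert_iff,
          Set.mem_singleton_iff] at ha hb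
        rcases ha with rfl | rfl <;> rcases hb with rfl | rfl
        · exact absurd rfl hne
        · exact hadj
        · exact hadj.symm
        · exact absurd rfl hne
      · rw [Finset.card_insert_of_notMem (by simp [hadj.ne]), Finset.card_singleton]
    · obtain ⟨Q, hQ1, hIH⟩ := ihk
      refine ⟨n * ((Ram k (Ram (k+1) n)) ^ n * Q) + 1, by omega, ?_⟩
      intro V _ G hS hP hK
      exact chi_step n k Q hn (by omega) hQ1 hIH (Fintype.card V) V G (le_refl _) hS hP hK

lemma pred_piece {V : Type} [Fintype V] (G : SimpleGraph V) (d : V) (c : ℕ) (f : V → ℕ)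
    (hf : ∀ v w, G.Adj v w → f v ≠ f w) :
    IsInducedStarSet G ({d} ∪ {v | G.Adj d v ∧ f v = c}) ∨
      IsSingletonSet ({d} ∪ {v | G.Adj d v ∧ f v = c}) := by
  classical
  set Lv : Set V := {v | G.Adj d v ∧ f v = c} with hLv
  rcases Set.eq_empty_or_nonempty Lv with hE | hNe
  · right
    refine ⟨d, ?_⟩
    rw [hE]
    simp
  · left
    have hdLv : d ∉ Lv := fun h => G.irrefl h.1
    have hm : 1 ≤ Fintype.card ↥Lv := Fintype.card_pos_iff.mpr hNe.to_subtype
    set m := Fintype.card ↥Lv with hmdef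
    have eL : ↥Lv ≃ Fin m := Fintype.equivFinOfCardEq rfl
    set S : Set V := {d} ∪ Lv with hS
    have hdS : d ∈ S := Or.inl rfl
    have hval : ∀ a : ↥S, (a : V) ∉ Lv → (a : V) = d := by
      intro a ha
      rcases a.2 with h | h
      · exact h
      · exact absurd h ha
    set g : ↥S → Unit ⊕ Fin m := fun a =>
      if h : (a : V) ∈ Lv then Sum.inr (eL ⟨a, h⟩) else Sum.inl () with hg
    set ginv : Unit ⊕ Fin m → ↥S := fun x =>
      match x with
      | Sum.inl _ => ⟨d, hdS⟩
      | Sum.inr i => ⟨(eL.symm i : V), Or.inr (eL.symm i).2⟩ with hginv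
    have hleft : Function.LeftInverse ginv g := by
      intro a
      by_cases h : (a : V) ∈ Lv
      · rw [hg]
        simp only [dif_pos h]
        rw [hginv]
        simp only [Equiv.symm_apply_apply]
      · rw [hg]
        simp only [dif_neg h]
        rw [hginv]
        exact Subtype.ext (hval a h).symm
    have hright : Function.RightInverse ginv g := by
      rintro (u | i)
      · rw [hginv, hg]
        simp only [dif_neg hdLv]
      · rw [hginv, hg]
        simp only [(eL.symm i).2, dif_pos]
        congr 1
        have : (⟨((eL.symm i : ↥Lv) : V), (eL.symm i).2⟩ : ↥Lv) = eL.symm i :=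
          Subtype.ext rfl
        rw [this, Equiv.apply_symm_apply]
    set e : ↥S ≃ (Unit ⊕ Fin m) := ⟨g, ginv, hleft, hright⟩ with he
    refine ⟨m, hm, ⟨?_⟩⟩
    refine ⟨e, ?_⟩
    intro a b
    have hge : ∀ x : ↥S, e x = g x := fun x => rfl
    rw [hge a, hge b]
    by_cases ha : (a : V) ∈ Lv <;> by_cases hb : (b : V) ∈ Lv
    · rw [hg]
      simp only [dif_pos ha, dif_pos hb]
      refine iff_of_false ?_ ?_
      · simp [_root_.starGraph, completeBipartiteGraph]
      · intro hadj
        have : G.Adj (a : V) (b : V) := hadj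
        exact hf _ _ this (ha.2.trans hb.2.symm)
    · rw [hg]
      simp only [dif_pos ha, dif_neg hb]
      refine iff_of_true ?_ ?_
      · simp [_root_.starGraph, completeBipartiteGraph]
      · have : G.Adj (a : V) (b : V) := by
          rw [hval b hb]
          exact ha.1.symm
        exact this
    · rw [hg]
      simp only [dif_neg ha, dif_pos hb]
      refine iff_of_true ?_ ?_
      · simp [_root_.starGraph, completeBipartiteGraph]
      · have : G.Adj (a : V) (b : V) := by
          rw [hval a ha]
          exact hb.1
        exact this
    · rw [hg]
      simp only [dif_neg ha, dif_neg hb]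
      refine iff_of_false ?_ ?_
      · simp [_root_.starGraph, completeBipartiteGraph]
      · intro hadj
        have : G.Adj (a : V) (b : V) := hadj
        rw [hval a ha, hval b hb] at this
        exact G.irrefl this

end SCAux

theorem statement_7 (n : ℕ) (hn : 4 ≤ n) :
    ∃ c : ℕ, ∀ (V : Type) [Fintype V] (G : SimpleGraph V),
      G.Connected →
      ¬ HasInducedCopy G (completeGraph (Fin n)) →
      ¬ HasInducedCopy G (SStar n) →
      ¬ HasInducedCopy G (pathGraph n) →
      insc G ≤ c := by
  classical
  obtain ⟨Q, hQ1, hQ⟩ := SCAux.chi_bound n hn n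
  set M := SCAux.Ram (n-1) (SCAux.Ram n n) with hMdef
  have hM1 : 1 ≤ M := SCAux.Ram_pos (by omega) (SCAux.Ram_pos (by omega) (by omega))
  refine ⟨1 + (n * M ^ n) * Q, ?_⟩
  intro V _ G hconn hK hS hP
  have hKfree : G.CliqueFree n := SCAux.cliqueFree_of_not_copy hK
  obtain ⟨f, hf1, hf2⟩ := hQ V G hS hP hKfree
  obtain ⟨r⟩ := hconn.nonempty
  obtain ⟨D, hD1, hD2, hD3⟩ :=
    SCAux.exists_level_dom (n := n) (k := n) (by omega) (by omega) hS hKfree r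
  set DD : Finset V := (Finset.range n).biUnion D with hDD
  set piece : V × ℕ → Set V := fun p => {p.1} ∪ {v | G.Adj p.1 v ∧ f v = p.2} with hpiece
  set P : Finset (Set V) := insert {r} ((DD ×ˢ Finset.range Q).image piece) with hPdef
  have hcover : IsCoverBy P (fun S => IsInducedStarSet G S ∨ IsSingletonSet S) := by
    constructor
    · intro S hs
      rcases Finset.mem_insert.mp hs with rfl | hs
      · exact Or.inr ⟨r, rfl⟩
      · obtain ⟨p, _, rfl⟩ := Finset.mem_image.mp hs
        exact SCAux.pred_piece G p.1 p.2 f hf2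
    · intro v
      by_cases hv : v = r
      · exact ⟨{r}, Finset.mem_insert_self _ _, by rw [hv]; exact rfl⟩
      · have hreach : G.Reachable r v := hconn.preconnected r v
        have hd1 : 1 ≤ G.dist r v := by
          rcases Nat.eq_zero_or_pos (G.dist r v) with h0 | h0
          · exact absurd (hreach.dist_eq_zero_iff.mp h0).symm hv
          · exact h0
        have hdn : G.dist r v + 2 ≤ n := SCAux.dist_add_two_le (by omega) hP hreach
        obtain ⟨d, hd, hadj⟩ := hD2 (G.dist r v - 1) v hreach (by omega)
        refine ⟨piece (d, f v), ?_, ?_⟩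
        · refine Finset.mem_insert_of_mem (Finset.mem_image_of_mem _ ?_)
          rw [Finset.mem_product]
          constructor
          · rw [hDD]
            exact Finset.mem_biUnion.mpr ⟨G.dist r v - 1, Finset.mem_range.mpr (by omega), hd⟩
          · exact Finset.mem_range.mpr (hf1 v)
        · exact Or.inr ⟨hadj, rfl⟩
  have hDDcard : DD.card ≤ n * M ^ n := by
    calc DD.card ≤ ∑ i ∈ Finset.range n, (D i).card := Finset.card_biUnion_le
      _ ≤ ∑ _i ∈ Finset.range n, M ^ n := by
        refine Finset.sum_le_sum ?_
        intro i hi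
        calc (D i).card ≤ M ^ i := hD3 i
          _ ≤ M ^ n := Nat.pow_le_pow_right hM1 (le_of_lt (Finset.mem_range.mp hi))
      _ = n * M ^ n := by
        rw [Finset.sum_const, Finset.card_range, smul_eq_mul]
  have hPcard : P.card ≤ 1 + (n * M ^ n) * Q := by
    calc P.card ≤ ((DD ×ˢ Finset.range Q).image piece).card + 1 := Finset.card_insert_le _ _
      _ ≤ (DD ×ˢ Finset.range Q).card + 1 := by
        have := Finset.card_image_le (s := DD ×ˢ Finset.range Q) (f := piece)
        omega
      _ = DD.card * Q + 1 := by rw [Finset.card_product, Finset.card_range]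
      _ ≤ (n * M ^ n) * Q + 1 := by
        have := Nat.mul_le_mul_right Q hDDcard
        omega
      _ = 1 + (n * M ^ n) * Q := by omega
  have hmem : P.card ∈ {k | ∃ P' : Finset (Set V), P'.card = k ∧
      IsCoverBy P' (fun S => IsInducedStarSet G S ∨ IsSingletonSet S)} := ⟨P, rfl, hcover⟩
  calc insc G ≤ P.card := Nat.sInf_le hmem
    _ ≤ 1 + (n * M ^ n) * Q := hPcard
end
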